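/- arXiv:1710.09095 — 9 statements merged into one kernel-verified Lean document; each statement's English description precedes it below -/
import Mathlib

section
/- Let L be a positive integer. For ℓ = 1, …, L set d(ℓ) = (−1)^ℓ · C(L, ℓ) · ∏_{k=0}^{ℓ−1} (1/2 − L + k)/(3/2 + k), and define D_L(z) = 1 + ∑_{ℓ=1}^{L} d(ℓ) z^{−ℓ} for z ∈ ℂ \ {0}. Then for every w ∈ ℂ \ {0}, with z = w², one has D_L(z) = (2(2L+1))^{−1} z^{−L} [(1 + w)^{2L+1} + (1 − w)^{2L+1}]. -/
open Finset
lemma coeffR (L : ℕ) : ∀ ℓ, ℓ ≤ L →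
    (-1 : ℝ) ^ ℓ * (Nat.choose L ℓ : ℝ) *
        ∏ k ∈ Finset.range ℓ, ((1/2 - (L : ℝ) + (k : ℝ)) / (3/2 + (k : ℝ)))
    = ((2*L+1).choose (2*ℓ+1) : ℝ) / (2*(L:ℝ)+1) := by
  intro ℓ
  induction ℓ with
  | zero =>
    intro _
    simp [Nat.choose_one_right]
    push_cast
    field_simp
  | succ ℓ ih =>
    intro hℓ
    have hℓL : ℓ ≤ L := le_of_lt hℓ
    have IH := ih hℓL
    have hS : (0:ℝ) < 2*(L:ℝ)+1 := by positivity
    have ha : (0:ℝ) < (Nat.choose L ℓ : ℝ) := by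
      exact_mod_cast Nat.choose_pos hℓL
    have hA : (Nat.choose L (ℓ+1) : ℝ) * ((ℓ:ℝ)+1) = (Nat.choose L ℓ : ℝ) * ((L:ℝ) - ℓ) := by
      have h2 : ((L.choose (ℓ+1)) * (ℓ+1) : ℝ) = ((L.choose ℓ) * (L - ℓ) : ℕ) := by
        exact_mod_cast congrArg (Nat.cast : ℕ → ℝ) (Nat.choose_succ_right_eq L ℓ)
      rw [Nat.cast_mul, Nat.cast_sub hℓL] at h2
      push_cast at h2 ⊢
      linarith
    have hB : (Nat.choose (2*L+1) (2*ℓ+2) : ℝ) * (2*(ℓ:ℝ)+2)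
        = (Nat.choose (2*L+1) (2*ℓ+1) : ℝ) * (2*(L:ℝ) - 2*ℓ) := by
      have h2 : ((2*L+1).choose (2*ℓ+1+1) * (2*ℓ+1+1) : ℝ)
          = (((2*L+1).choose (2*ℓ+1)) * ((2*L+1) - (2*ℓ+1)) : ℕ) := by
        exact_mod_cast congrArg (Nat.cast : ℕ → ℝ) (Nat.choose_succ_right_eq (2*L+1) (2*ℓ+1))
      rw [Nat.cast_mul, Nat.cast_sub (by omega)] at h2
      push_cast at h2 ⊢
      linarith
    have hC : (Nat.choose (2*L+1) (2*ℓ+3) : ℝ) * (2*(ℓ:ℝ)+3)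
        = (Nat.choose (2*L+1) (2*ℓ+2) : ℝ) * (2*(L:ℝ) - 2*ℓ - 1) := by
      have h2 : ((2*L+1).choose (2*ℓ+2+1) * (2*ℓ+2+1) : ℝ)
          = (((2*L+1).choose (2*ℓ+2)) * ((2*L+1) - (2*ℓ+2)) : ℕ) := by
        exact_mod_cast congrArg (Nat.cast : ℕ → ℝ) (Nat.choose_succ_right_eq (2*L+1) (2*ℓ+2))
      rw [Nat.cast_mul, Nat.cast_sub (by omega)] at h2
      push_cast at h2 ⊢
      linarith
    have hb3 : ((2*L+1).choose (2*(ℓ+1)+1) : ℝ)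
        = ((2*L+1).choose (2*ℓ+1) : ℝ) * (2*(L:ℝ) - 2*ℓ) * (2*(L:ℝ) - 2*ℓ - 1)
          / ((2*(ℓ:ℝ)+2) * (2*(ℓ:ℝ)+3)) := by
      rw [eq_div_iff (by positivity)]
      have : 2*(ℓ+1)+1 = 2*ℓ+3 := by ring
      rw [this]
      nlinarith [hB, hC]
    rw [prod_range_succ]
    set P := ∏ k ∈ Finset.range ℓ, ((1/2 - (L : ℝ) + (k : ℝ)) / (3/2 + (k : ℝ))) with hPdef
    have ha' : (Nat.choose L (ℓ+1) : ℝ) = (Nat.choose L ℓ : ℝ) * ((L:ℝ) - ℓ) / ((ℓ:ℝ)+1) := by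
      rw [eq_div_iff (by positivity)]; exact hA
    have hℓR : (ℓ:ℝ) + 1 ≤ (L:ℝ) := by exact_mod_cast hℓ
    have hne1 : ((ℓ:ℝ)+1) ≠ 0 := by positivity
    have hne2 : (2*(L:ℝ)+1) ≠ 0 := by positivity
    have hne3 : (Nat.choose L ℓ : ℝ) ≠ 0 := ne_of_gt ha
    have hne4 : (2*(ℓ:ℝ)+2) ≠ 0 := by positivity
    have hne5 : (2*(ℓ:ℝ)+3) ≠ 0 := by positivity
    have hne6 : (3/2 + (ℓ:ℝ)) ≠ 0 := by positivity
    have hne2' : ((1:ℝ)+(L:ℝ)*2) ≠ 0 := by positivity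
    rw [eq_div_iff hne2] at IH
    rcases Nat.even_or_odd ℓ with hpar | hpar
    · rw [hpar.neg_one_pow] at IH
      rw [pow_succ, hpar.neg_one_pow]
      have hPv : P = ((2*L+1).choose (2*ℓ+1) : ℝ) / ((2*(L:ℝ)+1) * (Nat.choose L ℓ : ℝ)) := by
        rw [eq_div_iff (by positivity)]
        linear_combination IH
      rw [ha', hPv, hb3]
      field_simp [hne2']
      ring
    · rw [hpar.neg_one_pow] at IH
      rw [pow_succ, hpar.neg_one_pow]
      have hPv0 : -P = ((2*L+1).choose (2*ℓ+1) : ℝ) / ((2*(L:ℝ)+1) * (Nat.choose L ℓ : ℝ)) := by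
        rw [eq_div_iff (by positivity)]
        linear_combination IH
      have hPv : P = -(((2*L+1).choose (2*ℓ+1) : ℝ) / ((2*(L:ℝ)+1) * (Nat.choose L ℓ : ℝ))) := by
        linarith [hPv0]
      rw [ha', hPv, hb3]
      field_simp [hne2']
      ring
open Finset

lemma pair_sum (f : ℕ → ℂ) (n : ℕ) :
    ∑ k ∈ range (2*n), f k = ∑ j ∈ range n, (f (2*j) + f (2*j+1)) := by
  induction n with
  | zero => simp
  | succ n ih =>
      rw [show 2*(n+1) = (2*n+1)+1 by ring, sum_range_succ, sum_range_succ, ih, sum_range_succ]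
      ring

lemma even_expand (n : ℕ) (w : ℂ) :
    (1 + w) ^ (2*n+1) + (1 - w) ^ (2*n+1)
      = ∑ j ∈ range (n+1), 2 * ((2*n+1).choose (2*j) : ℂ) * w ^ (2*j) := by
  have h1 : (1 + w) ^ (2*n+1) = ∑ k ∈ range (2*n+2), w ^ k * ((2*n+1).choose k : ℂ) := by
    rw [add_comm 1 w, add_pow]
    exact Finset.sum_congr rfl (fun k _ => by ring)
  have h2 : (1 - w) ^ (2*n+1) = ∑ k ∈ range (2*n+2), (-w) ^ k * ((2*n+1).choose k : ℂ) := by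
    rw [show (1 - w) = (-w) + 1 by ring, add_pow]
    exact Finset.sum_congr rfl (fun k _ => by ring)
  rw [h1, h2, ← Finset.sum_add_distrib]
  rw [show 2*n+2 = 2*(n+1) by ring, pair_sum]
  refine Finset.sum_congr rfl (fun j _ => ?_)
  have he : (-w) ^ (2*j) = w ^ (2*j) := Even.neg_pow ⟨j, by ring⟩ w
  have ho : (-w) ^ (2*j+1) = -(w ^ (2*j+1)) := Odd.neg_pow ⟨j, by ring⟩ w
  rw [he, ho]
  ring

/-- Closed-form expression for the Thiran common factor `D_L`. -/
theorem thiran_D_closed_form (L : ℕ) (hL : 0 < L)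
    (d : ℕ → ℝ)
    (hd : ∀ ℓ, 1 ≤ ℓ → ℓ ≤ L →
      d ℓ = (-1 : ℝ) ^ ℓ * (Nat.choose L ℓ : ℝ) *
        ∏ k ∈ Finset.range ℓ, ((1/2 - (L : ℝ) + (k : ℝ)) / (3/2 + (k : ℝ))))
    (D : ℂ → ℂ)
    (hD : ∀ z : ℂ, z ≠ 0 →
      D z = 1 + ∑ ℓ ∈ Finset.Icc 1 L, (d ℓ : ℂ) * z ^ (-(ℓ : ℤ))) :
    ∀ w : ℂ, w ≠ 0 →
      D (w ^ 2) = (1 / (2 * (2 * (L : ℂ) + 1))) * (w ^ 2) ^ (-(L : ℤ)) *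
        ((1 + w) ^ (2 * L + 1) + (1 - w) ^ (2 * L + 1)) := by
  intro w hw
  have hz : (w : ℂ) ^ 2 ≠ 0 := pow_ne_zero 2 hw
  have hS : (2 * (L : ℂ) + 1) ≠ 0 := by
    have h := (Nat.cast_ne_zero (R := ℂ)).mpr (show 2*L+1 ≠ 0 by omega)
    intro h'
    apply h
    push_cast
    linear_combination h'
  rw [hD _ hz]
  have hsum : (1 : ℂ) + ∑ ℓ ∈ Finset.Icc 1 L, ((d ℓ : ℝ) : ℂ) * ((w:ℂ)^2) ^ (-(ℓ:ℤ))
      = ∑ ℓ ∈ Finset.range (L+1),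
          (((2*L+1).choose (2*ℓ+1) : ℕ) : ℂ) / (2*(L:ℂ)+1) * ((w:ℂ)^2) ^ (-(ℓ:ℤ)) := by
    have h0 : Finset.range (L+1) = insert 0 (Finset.Icc 1 L) := by
      ext x
      simp only [Finset.mem_range, Finset.mem_insert, Finset.mem_Icc]
      omega
    rw [h0, Finset.sum_insert (by simp)]
    congr 1
    · simp only [Nat.mul_zero, Nat.zero_add, Nat.choose_one_right, Nat.cast_zero, neg_zero,
        zpow_zero, mul_one]
      rw [eq_comm, div_eq_one_iff_eq hS]
      push_cast
      ring
    · refine Finset.sum_congr rfl fun ℓ hℓ => ?_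
      simp only [Finset.mem_Icc] at hℓ
      have hdl : d ℓ = (((2*L+1).choose (2*ℓ+1) : ℕ) : ℝ) / (2*(L:ℝ)+1) := by
        rw [hd ℓ hℓ.1 hℓ.2]; exact coeffR L ℓ hℓ.2
      rw [hdl]
      push_cast
      ring
  rw [hsum, even_expand L w, Finset.mul_sum, ← Finset.sum_range_reflect]
  refine Finset.sum_congr rfl fun j hj => ?_
  simp only [Finset.mem_range, Nat.lt_succ_iff] at hj
  have h1 : L + 1 - 1 - j = L - j := by omega
  have h2 : 2*(L-j)+1 = 2*L+1 - 2*j := by omega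
  rw [h1, h2, Nat.choose_symm (by omega)]
  have h3 : (-(((L-j) : ℕ) : ℤ)) = -(L:ℤ) + (j:ℤ) := by
    push_cast [Nat.cast_sub hj]; ring
  rw [h3, zpow_add₀ hz, zpow_natCast, pow_mul]
  field_simp
end

section
/- Let L be a positive integer. For ℓ = 1, …, L set d(ℓ) = (−1)^ℓ · C(L, ℓ) · ∏_{k=0}^{ℓ−1} (1/2 − L + k)/(3/2 + k), and set d(0) = 1. Then for every ℓ = 0, 1, …, L one has d(ℓ) = C(2L+1, 2(L−ℓ)) / (2L+1). Equivalently, for every n = 0, …, L, d(L−n)/d(L) = C(2L+1, 2n) and d(L) = 1/(2L+1). -/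
lemma thiran_key (L : ℕ) : ∀ ℓ, ℓ ≤ L →
    (2*(L:ℝ)+1) * (-1:ℝ)^ℓ * (Nat.choose L ℓ : ℝ) *
      (∏ k ∈ Finset.range ℓ, (1/2 - (L:ℝ) + (k:ℝ))) =
    (Nat.choose (2*L+1) (2*(L-ℓ)) : ℝ) *
      (∏ k ∈ Finset.range ℓ, (3/2 + (k:ℝ))) := by
  intro ℓ
  induction ℓ with
  | zero =>
    intro _
    norm_num
  | succ ℓ ih =>
    intro hℓ
    have hℓ' : ℓ < L := hℓ
    have ih' := ih hℓ'.le
    -- nat identity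
    obtain ⟨s, hs⟩ : ∃ s, L = s + ℓ + 1 := ⟨L - ℓ - 1, by omega⟩
    have h1 := Nat.choose_succ_right_eq (2*s+2*ℓ+3) (2*s)
    have h2 := Nat.choose_succ_right_eq (2*s+2*ℓ+3) (2*s+1)
    rw [show 2*s+2*ℓ+3 - 2*s = 2*ℓ+3 by omega] at h1
    rw [show 2*s+2*ℓ+3 - (2*s+1) = 2*ℓ+2 by omega] at h2
    have hkeyN : Nat.choose (2*L+1) (2*(L-(ℓ+1))) * ((2*ℓ+2)*(2*ℓ+3))
        = Nat.choose (2*L+1) (2*(L-ℓ)) * ((2*(L-ℓ))*(2*(L-ℓ)-1)) := by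
      rw [show 2*L+1 = 2*s+2*ℓ+3 by omega, show 2*(L-(ℓ+1)) = 2*s by omega,
        show 2*(L-ℓ) = 2*s+2 by omega, show 2*s+2-1 = 2*s+1 by omega]
      calc Nat.choose (2*s+2*ℓ+3) (2*s) * ((2*ℓ+2)*(2*ℓ+3))
          = Nat.choose (2*s+2*ℓ+3) (2*s) * (2*ℓ+3) * (2*ℓ+2) := by ring
        _ = Nat.choose (2*s+2*ℓ+3) (2*s+1) * (2*s+1) * (2*ℓ+2) := by rw [h1]
        _ = Nat.choose (2*s+2*ℓ+3) (2*s+1) * (2*ℓ+2) * (2*s+1) := by ring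
        _ = Nat.choose (2*s+2*ℓ+3) (2*s+2) * (2*s+2) * (2*s+1) := by rw [h2]
        _ = _ := by rw [show 2*s+2 = 2*s+1+1 from rfl]; ring
    have hkey : (Nat.choose (2*L+1) (2*(L-(ℓ+1))) : ℝ) * ((2*(ℓ:ℝ)+2)*(2*ℓ+3))
        = (Nat.choose (2*L+1) (2*(L-ℓ)) : ℝ) * ((2*(L:ℝ)-2*ℓ)*(2*L-2*ℓ-1)) := by
      have := congrArg (Nat.cast : ℕ → ℝ) hkeyN
      push_cast [Nat.cast_sub hℓ'.le, Nat.cast_sub (show 1 ≤ 2*(L-ℓ) by omega)] at this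
      linear_combination this
    have hchoose : (Nat.choose L (ℓ+1) : ℝ) * ((ℓ:ℝ)+1) = (Nat.choose L ℓ : ℝ) * ((L:ℝ)-ℓ) := by
      have := congrArg (Nat.cast : ℕ → ℝ) (Nat.choose_succ_right_eq L ℓ)
      push_cast [Nat.cast_sub hℓ'.le] at this
      linear_combination this
    rw [Finset.prod_range_succ, Finset.prod_range_succ]
    have hcancel : ((ℓ:ℝ)+1) ≠ 0 := by positivity
    apply mul_left_cancel₀ hcancel
    set N := ∏ k ∈ Finset.range ℓ, (1/2 - (L:ℝ) + (k:ℝ)) with hN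
    set D := ∏ k ∈ Finset.range ℓ, (3/2 + (k:ℝ)) with hD
    linear_combination (((L:ℝ)-ℓ)*((L:ℝ)-ℓ-1/2)) * ih' +
      ((2*(L:ℝ)+1)*(-(-1:ℝ)^ℓ)*N*(1/2-(L:ℝ)+ℓ)) * hchoose + (-D/4) * hkey

/-- Closed-form expression for the Thiran filter coefficients. -/
theorem thiran_coefficients (L : ℕ) (hL : 0 < L)
    (d : ℕ → ℝ)
    (hd0 : d 0 = 1)
    (hd : ∀ ℓ, 1 ≤ ℓ → ℓ ≤ L →
      d ℓ = (-1 : ℝ) ^ ℓ * (Nat.choose L ℓ : ℝ) *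
        ∏ k ∈ Finset.range ℓ, ((1/2 - (L : ℝ) + (k : ℝ)) / (3/2 + (k : ℝ)))) :
    (∀ ℓ ≤ L, d ℓ = (Nat.choose (2 * L + 1) (2 * (L - ℓ)) : ℝ) / (2 * (L : ℝ) + 1)) ∧
    (∀ n ≤ L, d (L - n) / d L = (Nat.choose (2 * L + 1) (2 * n) : ℝ)) ∧
    d L = 1 / (2 * (L : ℝ) + 1) := by
  have h2L : (2*(L:ℝ)+1) ≠ 0 := by positivity
  have main : ∀ ℓ ≤ L, d ℓ = (Nat.choose (2 * L + 1) (2 * (L - ℓ)) : ℝ) / (2 * (L : ℝ) + 1) := by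
    intro ℓ hℓ
    have hDpos : (0:ℝ) < ∏ k ∈ Finset.range ℓ, (3/2 + (k:ℝ)) := by
      apply Finset.prod_pos; intro k _; positivity
    have hkey := thiran_key L ℓ hℓ
    have hdℓ : d ℓ = (-1 : ℝ) ^ ℓ * (Nat.choose L ℓ : ℝ) *
        ∏ k ∈ Finset.range ℓ, ((1/2 - (L : ℝ) + (k : ℝ)) / (3/2 + (k : ℝ))) := by
      rcases Nat.eq_zero_or_pos ℓ with h | h
      · subst h; simpa using hd0
      · exact hd ℓ h hℓ
    rw [hdℓ, Finset.prod_div_distrib, mul_div_assoc', div_eq_div_iff hDpos.ne' h2L]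
    linear_combination hkey
  refine ⟨main, ?_, ?_⟩
  · intro n hn
    have h1 := main (L - n) (Nat.sub_le L n)
    have h2 := main L le_rfl
    rw [show L - (L - n) = n by omega] at h1
    rw [Nat.sub_self] at h2
    simp only [mul_zero, Nat.choose_zero_right, Nat.cast_one] at h2
    rw [h1, h2]
    field_simp
  · have h2 := main L le_rfl
    rw [Nat.sub_self] at h2
    simpa using h2
end

section
/- Let L be a positive integer and define D_L(z) = (2L+1)^{−1} ∑_{n=0}^{L} C(2L+1, 2n) z^{n−L} for z ∈ ℂ \ {0}. Then for every θ ∈ ℝ, D_L(e^{2iθ}) · D_L(e^{−2iθ}) = (2^{2L}/(2L+1)²) ∑_{n=0}^{L} C(2L+1, 2n) cos^{2n}(θ). In particular |D_L(e^{2iθ})|² equals this quantity. -/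
open Complex

lemma sum_range_two_mul'' {M : Type*} [AddCommMonoid M] (m : ℕ) (f : ℕ → M) :
    ∑ k ∈ Finset.range (2 * m), f k = ∑ n ∈ Finset.range m, (f (2 * n) + f (2 * n + 1)) := by
  induction m with
  | zero => simp
  | succ m ih =>
    rw [show 2 * (m + 1) = (2 * m + 1) + 1 by ring, Finset.sum_range_succ, Finset.sum_range_succ,
      ih, Finset.sum_range_succ, add_assoc]

lemma evenSum (x : ℂ) (m : ℕ) :
    (1 + x) ^ (2 * m + 1) + (1 - x) ^ (2 * m + 1) =
      2 * ∑ n ∈ Finset.range (m + 1), (Nat.choose (2 * m + 1) (2 * n) : ℂ) * x ^ (2 * n) := by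
  rw [show (1 + x) = x + 1 by ring, show (1 - x) = -x + 1 by ring, add_pow, add_pow]
  simp only [one_pow, mul_one]
  rw [← Finset.sum_add_distrib, show 2 * m + 1 + 1 = 2 * (m + 1) by ring,
    sum_range_two_mul'', Finset.mul_sum]
  refine Finset.sum_congr rfl fun n _ => ?_
  have h1 : (-x) ^ (2 * n) = x ^ (2 * n) := (even_two_mul n).neg_pow x
  have h2 : (-x) ^ (2 * n + 1) = -(x ^ (2 * n + 1)) := by
    rw [pow_succ, pow_succ, h1]; ring
  rw [h1, h2]; ring

lemma keyS (L : ℕ) (w : ℂ) (hw : w ≠ 0) :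
    ∑ n ∈ Finset.range (L + 1), (Nat.choose (2 * L + 1) (2 * n) : ℂ) *
        (w ^ 2) ^ ((n : ℤ) - (L : ℤ)) =
      (w ^ (2 * L))⁻¹ * (((1 + w) ^ (2 * L + 1) + (1 - w) ^ (2 * L + 1)) / 2) := by
  rw [evenSum, mul_comm (2 : ℂ), mul_div_assoc, div_self (two_ne_zero), mul_one,
    Finset.mul_sum]
  refine Finset.sum_congr rfl fun n hn => ?_
  have h : (w ^ 2) ^ ((n : ℤ) - (L : ℤ)) = (w ^ (2 * L))⁻¹ * w ^ (2 * n) := by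
    rw [← zpow_natCast w 2, ← zpow_mul, mul_sub, zpow_sub₀ hw,
      ← zpow_natCast w (2 * n), ← zpow_natCast w (2 * L)]
    push_cast
    rw [div_eq_mul_inv, mul_comm]
  rw [h]; ring


/-- The Thiran common factor `D_L` (closed binomial form). -/
noncomputable def DL (L : ℕ) (z : ℂ) : ℂ :=
  (1 / (2 * (L : ℂ) + 1)) *
    ∑ n ∈ Finset.range (L + 1), (Nat.choose (2 * L + 1) (2 * n) : ℂ) * z ^ ((n : ℤ) - (L : ℤ))

/-- `D_L(e^{2iθ}) D_L(e^{-2iθ})` as a cosine polynomial, and the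
corresponding expression for `|D_L(e^{2iθ})|²`. -/
theorem DL_squared_modulus (L : ℕ) (hL : 0 < L) (θ : ℝ) :
    DL L (Complex.exp (2 * Complex.I * (θ : ℂ))) *
        DL L (Complex.exp (-(2 * Complex.I * (θ : ℂ)))) =
      ((2 : ℂ) ^ (2 * L) / (2 * (L : ℂ) + 1) ^ 2) *
        ∑ n ∈ Finset.range (L + 1),
          (Nat.choose (2 * L + 1) (2 * n) : ℂ) * (Real.cos θ : ℂ) ^ (2 * n) ∧
    (‖(DL L (Complex.exp (2 * Complex.I * (θ : ℂ))))‖) ^ 2 =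
      ((2 : ℝ) ^ (2 * L) / (2 * (L : ℝ) + 1) ^ 2) *
        ∑ n ∈ Finset.range (L + 1),
          (Nat.choose (2 * L + 1) (2 * n) : ℝ) * Real.cos θ ^ (2 * n) := by
  set c : ℂ := ((Real.cos θ : ℝ) : ℂ) with hcdef
  set w : ℂ := Complex.exp ((θ : ℂ) * Complex.I) with hwdef
  have hw : w ≠ 0 := Complex.exp_ne_zero _
  have hu : w⁻¹ = Complex.exp (-((θ : ℂ) * Complex.I)) := by
    rw [hwdef, ← Complex.exp_neg]
  have hu0 : w⁻¹ ≠ 0 := inv_ne_zero hw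
  have hwu : w * w⁻¹ = 1 := mul_inv_cancel₀ hw
  have hz : Complex.exp (2 * Complex.I * (θ : ℂ)) = w ^ 2 := by
    rw [hwdef, sq, ← Complex.exp_add]; ring_nf
  have hz' : Complex.exp (-(2 * Complex.I * (θ : ℂ))) = (w⁻¹) ^ 2 := by
    rw [hu, sq, ← Complex.exp_add]; ring_nf
  have hc : c = (w + w⁻¹) / 2 := by
    rw [hcdef, hu, hwdef, Complex.ofReal_cos, Complex.cos]; ring_nf
  have hcast : (2 * (L : ℂ) + 1) ≠ 0 := by
    have h1 : ((2 * L + 1 : ℕ) : ℂ) = 2 * (L : ℂ) + 1 := by push_cast; ring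
    rw [← h1]
    exact Nat.cast_ne_zero.mpr (by omega)
  have hnz : w ^ (2 * L) ≠ 0 := pow_ne_zero _ hw
  have hmain : DL L (w ^ 2) * DL L ((w⁻¹) ^ 2) =
      ((2 : ℂ) ^ (2 * L) / (2 * (L : ℂ) + 1) ^ 2) *
        ∑ n ∈ Finset.range (L + 1),
          (Nat.choose (2 * L + 1) (2 * n) : ℂ) * c ^ (2 * n) := by
    have hinv : ((w⁻¹) ^ (2 * L))⁻¹ = w ^ (2 * L) := by
      rw [← inv_pow, inv_inv]
    have hP : ((1 + w) ^ (2 * L + 1) + (1 - w) ^ (2 * L + 1)) *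
        ((1 + w⁻¹) ^ (2 * L + 1) + (1 - w⁻¹) ^ (2 * L + 1)) =
        (2 * (1 + c)) ^ (2 * L + 1) + (2 * (1 - c)) ^ (2 * L + 1) := by
      have e1 : (1 + w) * (1 + w⁻¹) = 2 * (1 + c) := by
        rw [hc]; linear_combination hwu
      have e2 : (1 - w) * (1 - w⁻¹) = 2 * (1 - c) := by
        rw [hc]; linear_combination hwu
      have e3 : (1 + w) * (1 - w⁻¹) = w - w⁻¹ := by linear_combination -hwu
      have e4 : (1 - w) * (1 + w⁻¹) = -(w - w⁻¹) := by linear_combination -hwu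
      have hodd : Odd (2 * L + 1) := odd_two_mul_add_one L
      calc ((1 + w) ^ (2 * L + 1) + (1 - w) ^ (2 * L + 1)) *
          ((1 + w⁻¹) ^ (2 * L + 1) + (1 - w⁻¹) ^ (2 * L + 1))
          = ((1 + w) * (1 + w⁻¹)) ^ (2 * L + 1) + ((1 + w) * (1 - w⁻¹)) ^ (2 * L + 1)
            + ((1 - w) * (1 + w⁻¹)) ^ (2 * L + 1) + ((1 - w) * (1 - w⁻¹)) ^ (2 * L + 1) := by
            rw [mul_pow, mul_pow, mul_pow, mul_pow]; ring
        _ = (2 * (1 + c)) ^ (2 * L + 1) + (2 * (1 - c)) ^ (2 * L + 1) := by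
            rw [e1, e2, e3, e4, hodd.neg_pow]; ring
    have hsum : (1 + c) ^ (2 * L + 1) + (1 - c) ^ (2 * L + 1) =
        2 * ∑ n ∈ Finset.range (L + 1),
          (Nat.choose (2 * L + 1) (2 * n) : ℂ) * c ^ (2 * n) := evenSum c L
    simp only [DL, keyS L w hw, keyS L w⁻¹ hu0, hinv]
    set S : ℂ := ∑ n ∈ Finset.range (L + 1),
        (Nat.choose (2 * L + 1) (2 * n) : ℂ) * c ^ (2 * n) with hS
    set Pw : ℂ := (1 + w) ^ (2 * L + 1) + (1 - w) ^ (2 * L + 1) with hPw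
    set Pu : ℂ := (1 + w⁻¹) ^ (2 * L + 1) + (1 - w⁻¹) ^ (2 * L + 1) with hPu
    have hx : (w ^ (2 * L))⁻¹ * w ^ (2 * L) = 1 := inv_mul_cancel₀ hnz
    have hPS : Pw * Pu = 2 ^ (2 * L + 2) * S := by
      calc Pw * Pu = 2 ^ (2 * L + 1) * ((1 + c) ^ (2 * L + 1) + (1 - c) ^ (2 * L + 1)) := by
            rw [hP, mul_pow, mul_pow]; ring
        _ = 2 ^ (2 * L + 2) * S := by rw [hsum]; ring
    calc (1 / (2 * (L : ℂ) + 1) * ((w ^ (2 * L))⁻¹ * (Pw / 2))) *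
        (1 / (2 * (L : ℂ) + 1) * (w ^ (2 * L) * (Pu / 2)))
        = ((w ^ (2 * L))⁻¹ * w ^ (2 * L)) * (Pw * Pu) *
            (1 / (2 * (L : ℂ) + 1)) ^ 2 / 4 := by ring
      _ = 2 ^ (2 * L + 2) * S * (1 / (2 * (L : ℂ) + 1)) ^ 2 / 4 := by
            rw [hx, hPS, one_mul]
      _ = ((2 : ℂ) ^ (2 * L) / (2 * (L : ℂ) + 1) ^ 2) * S := by
            field_simp; ring
  constructor
  · rw [hz, hz', hmain]
  · have hconj : DL L ((w⁻¹) ^ 2) = (starRingEnd ℂ) (DL L (w ^ 2)) := by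
      have hcw : (starRingEnd ℂ) w = w⁻¹ := by
        rw [hwdef, hu, ← Complex.exp_conj]
        congr 1
        simp [Complex.conj_ofReal]
      have hce : (starRingEnd ℂ) (w ^ 2) = (w⁻¹) ^ 2 := by
        rw [map_pow, hcw]
      simp only [DL, map_mul, map_sum, map_div₀, map_one, map_add, map_ofNat,
        map_natCast, map_zpow₀, hce]
    rw [hz]
    have habs : ((‖DL L (w ^ 2)‖ ^ 2 : ℝ) : ℂ) =
        DL L (w ^ 2) * DL L ((w⁻¹) ^ 2) := by
      rw [hconj, ← Complex.normSq_eq_norm_sq]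
      exact (Complex.mul_conj _).symm
    have := habs.trans hmain
    apply Complex.ofReal_injective
    rw [this]
    simp only [hcdef]
    push_cast
    ring
end

section
/- Let L be a positive integer and define D_L(z) = (2L+1)^{−1} ∑_{n=0}^{L} C(2L+1, 2n) z^{n−L} for z ∈ ℂ \ {0}. Then D_L does not vanish on the unit circle, and for every z ∈ ℂ with |z| = 1 one has 2^L/(2L+1) ≤ |D_L(z)| ≤ 2^{2L}/(2L+1). Moreover the minimum is attained at z = −1 with |D_L(−1)| = 2^L/(2L+1) and the maximum at z = 1 with |D_L(1)| = 2^{2L}/(2L+1). -/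
open Complex

lemma sum_range_double {M : Type*} [AddCommMonoid M] (f : ℕ → M) (n : ℕ) :
    ∑ k ∈ Finset.range (2*n), f k = ∑ i ∈ Finset.range n, (f (2*i) + f (2*i+1)) := by
  induction n with
  | zero => simp
  | succ n ih =>
    have h : 2*(n+1) = (2*n+1)+1 := by ring
    rw [h, Finset.sum_range_succ, Finset.sum_range_succ, ih, Finset.sum_range_succ, add_assoc]

lemma sum_even (L : ℕ) (w : ℂ) :
    ∑ n ∈ Finset.range (L+1), ((2*L+1).choose (2*n) : ℂ) * (w^2)^n
      = ((1+w)^(2*L+1) + (1-w)^(2*L+1)) / 2 := by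
  have h1 : (1+w)^(2*L+1) = ∑ k ∈ Finset.range (2*L+2), w^k * ((2*L+1).choose k : ℂ) := by
    rw [add_comm, add_pow]; simp
  have h2 : (1-w)^(2*L+1) = ∑ k ∈ Finset.range (2*L+2), (-w)^k * ((2*L+1).choose k : ℂ) := by
    rw [sub_eq_neg_add, add_pow]; simp
  rw [h1, h2, ← Finset.sum_add_distrib]
  have h3 : (2*L+2) = 2*(L+1) := by ring
  rw [h3, sum_range_double (fun k => w^k * ((2*L+1).choose k : ℂ) + (-w)^k * ((2*L+1).choose k : ℂ)) (L+1)]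
  rw [eq_div_iff (two_ne_zero), Finset.sum_mul]
  refine Finset.sum_congr rfl fun i _ => ?_
  have he : (-w)^(2*i) = w^(2*i) := (Even.neg_pow ⟨i, by ring⟩ w)
  have ho : (-w)^(2*i+1) = -(w^(2*i+1)) := (Odd.neg_pow ⟨i, by ring⟩ w)
  rw [he, ho, ← pow_mul]
  ring

lemma odd_pow_re_zero (u : ℂ) (hu : u.re = 0) (k : ℕ) : (u ^ (2*k+1)).re = 0 := by
  have h1 : u = (u.im : ℂ) * I := by
    conv_lhs => rw [← Complex.re_add_im u]
    rw [hu]; simp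
  have h2 : I ^ (2*k+1) = (-1:ℂ)^k * I := by
    rw [pow_succ, pow_mul, Complex.I_sq]
  rw [h1, mul_pow, h2]
  have h3 : ((u.im : ℂ))^(2*k+1) * ((-1:ℂ)^k * I) = ((u.im^(2*k+1) * (-1:ℝ)^k : ℝ) : ℂ) * I := by
    push_cast; ring
  rw [h3, Complex.mul_I_re, Complex.ofReal_im, neg_zero]

lemma sum4 (w : ℂ) (hw : Complex.normSq w = 1) :
    Complex.normSq (1+w) + Complex.normSq (1-w) = 4 := by
  rw [Complex.normSq_add, Complex.normSq_sub, hw]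
  simp [Complex.normSq_one]
  ring

lemma absF_sq (L : ℕ) (w : ℂ) (hw : Complex.normSq w = 1) :
    ‖((1+w)^(2*L+1) + (1-w)^(2*L+1)) / 2‖ ^ 2
      = (Complex.normSq (1+w) ^ (2*L+1) + Complex.normSq (1-w) ^ (2*L+1)) / 4 := by
  have hconj : (1+w)^(2*L+1) * (starRingEnd ℂ) ((1-w)^(2*L+1)) = (w - (starRingEnd ℂ) w)^(2*L+1) := by
    rw [map_pow, ← mul_pow]
    congr 1
    have h1 : w * (starRingEnd ℂ) w = 1 := by
      rw [Complex.mul_conj, hw]; simp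
    have h2 : (starRingEnd ℂ) (1 - w) = 1 - (starRingEnd ℂ) w := by simp
    rw [h2]
    linear_combination -h1
  have hre : ((w - (starRingEnd ℂ) w)^(2*L+1)).re = 0 := by
    apply odd_pow_re_zero
    simp
  rw [norm_div, div_pow, Complex.sq_norm, Complex.normSq_add, map_pow, map_pow, hconj, hre]
  rw [Complex.norm_two]; ring

lemma abs_DL (L : ℕ) (w : ℂ) (hw : ‖w‖ = 1) :
    ‖DL L (w^2)‖
      = ‖((1+w)^(2*L+1) + (1-w)^(2*L+1)) / 2‖ / (2*(L:ℝ)+1) := by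
  have hz : (w^2 : ℂ) ≠ 0 := by
    intro h
    rw [pow_eq_zero_iff (by norm_num)] at h
    rw [h] at hw; simp at hw
  have hterm : ∀ n ∈ Finset.range (L+1),
      ((2*L+1).choose (2*n) : ℂ) * (w^2) ^ ((n:ℤ) - (L:ℤ))
        = (((2*L+1).choose (2*n) : ℂ) * (w^2)^n) * (((w^2):ℂ)^L)⁻¹ := by
    intro n _
    rw [zpow_sub₀ hz, zpow_natCast, zpow_natCast, div_eq_mul_inv, mul_assoc]
  unfold DL
  rw [Finset.sum_congr rfl hterm, ← Finset.sum_mul, sum_even L w, norm_mul, norm_mul,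
    norm_inv, norm_pow, norm_pow, hw]
  have habs : ‖1 / (2*(L:ℂ)+1)‖ = 1/(2*(L:ℝ)+1) := by
    have h : (2*(L:ℂ)+1) = ((2*(L:ℝ)+1 : ℝ) : ℂ) := by push_cast; ring
    rw [norm_div, norm_one, h, Complex.norm_real, Real.norm_eq_abs, abs_of_pos (by positivity)]
  rw [habs]
  simp
  ring

lemma S_bounds (L : ℕ) (hL : 0 < L) (w : ℂ) (hw : ‖w‖ = 1) :
    (2:ℝ)^L ≤ ‖((1+w)^(2*L+1) + (1-w)^(2*L+1)) / 2‖ ∧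
    ‖((1+w)^(2*L+1) + (1-w)^(2*L+1)) / 2‖ ≤ (2:ℝ)^(2*L) := by
  have hnsq : Complex.normSq w = 1 := by rw [← Complex.sq_norm, hw]; norm_num
  set a := Complex.normSq (1+w) with ha_def
  set b := Complex.normSq (1-w) with hb_def
  have hab : a + b = 4 := sum4 w hnsq
  have ha : 0 ≤ a := Complex.normSq_nonneg _
  have hb : 0 ≤ b := Complex.normSq_nonneg _
  set S := ‖((1+w)^(2*L+1) + (1-w)^(2*L+1)) / 2‖ with hS_def
  have hS : 0 ≤ S := norm_nonneg _
  have hsq : S^2 = (a^(2*L+1) + b^(2*L+1)) / 4 := absF_sq L w hnsq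
  constructor
  · have h1 : (4:ℝ)^(2*L+1) ≤ 2^(2*L) * (a^(2*L+1) + b^(2*L+1)) := by
      have := add_pow_le ha hb (2*L+1)
      rw [hab] at this
      simpa using this
    have e1 : (4:ℝ)^(2*L+1) = 2^(2*L) * 2^(2*L+2) := by
      rw [show (4:ℝ) = 2^2 by norm_num, ← pow_mul, ← pow_add]
      congr 1; ring
    have h2 : (2:ℝ)^(2*L+2) ≤ a^(2*L+1) + b^(2*L+1) := by
      rw [e1] at h1
      exact le_of_mul_le_mul_left h1 (by positivity)
    have h3 : ((2:ℝ)^L)^2 ≤ S^2 := by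
      rw [hsq, le_div_iff₀ (by norm_num : (0:ℝ) < 4)]
      calc ((2:ℝ)^L)^2 * 4 = 2^(2*L+2) := by
            rw [← pow_mul, pow_add]; norm_num; ring_nf
        _ ≤ _ := h2
    exact (pow_le_pow_iff_left₀ (by positivity) hS (by norm_num)).mp h3
  · have h1 : a^(2*L+1) + b^(2*L+1) ≤ (4:ℝ)^(2*L+1) := by
      calc a^(2*L+1) + b^(2*L+1) ≤ (a+b)^(2*L+1) := pow_add_pow_le ha hb (by omega)
        _ = 4^(2*L+1) := by rw [hab]
    have h3 : S^2 ≤ ((2:ℝ)^(2*L))^2 := by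
      rw [hsq, div_le_iff₀ (by norm_num : (0:ℝ) < 4)]
      calc a^(2*L+1) + b^(2*L+1) ≤ (4:ℝ)^(2*L+1) := h1
        _ = ((2:ℝ)^(2*L))^2 * 4 := by
            rw [show (4:ℝ) = 2^2 by norm_num, ← pow_mul, ← pow_mul, ← pow_add]
            congr 1; ring
    exact (pow_le_pow_iff_left₀ hS (by positivity) (by norm_num)).mp h3

lemma S_val_one (L : ℕ) :
    ‖((1+1:ℂ)^(2*L+1) + (1-1:ℂ)^(2*L+1)) / 2‖ = (2:ℝ)^(2*L) := by
  have h : ((1+1:ℂ)^(2*L+1) + (1-1:ℂ)^(2*L+1)) / 2 = 2^(2*L) := by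
    have h0 : ((1:ℂ)-1)^(2*L+1) = 0 := by
      rw [sub_self, zero_pow (by omega)]
    rw [h0, add_zero]
    norm_num [pow_succ]
  rw [h, norm_pow, Complex.norm_two]

lemma S_val_I (L : ℕ) :
    ‖((1+I)^(2*L+1) + (1-I)^(2*L+1)) / 2‖ = (2:ℝ)^L := by
  have hnsq : Complex.normSq I = 1 := by simp
  have ha : Complex.normSq (1+I) = 2 := by
    simp [Complex.normSq_apply]; norm_num
  have hb : Complex.normSq (1-I) = 2 := by
    simp [Complex.normSq_apply]; norm_num
  have hsq := absF_sq L I hnsq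
  rw [ha, hb] at hsq
  have h2 : ((2:ℝ)^L)^2 = ((2:ℝ)^(2*L+1) + 2^(2*L+1)) / 4 := by
    rw [← pow_mul]
    rw [show ((2:ℝ)^(2*L+1) + 2^(2*L+1)) = 2^(2*L+2) by rw [pow_succ, pow_succ]; ring]
    rw [pow_add]; norm_num; ring_nf
  rw [← h2] at hsq
  exact (sq_eq_sq₀ (norm_nonneg _) (by positivity)).mp hsq

/-- `D_L` does not vanish on the unit circle; bounds and extrema of
its modulus there. -/
theorem DL_min_max_on_circle (L : ℕ) (hL : 0 < L) :
    (∀ z : ℂ, ‖z‖ = 1 → DL L z ≠ 0) ∧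
    (∀ z : ℂ, ‖z‖ = 1 →
      (2 : ℝ) ^ L / (2 * (L : ℝ) + 1) ≤ ‖DL L z‖ ∧
      ‖DL L z‖ ≤ (2 : ℝ) ^ (2 * L) / (2 * (L : ℝ) + 1)) ∧
    ‖DL L (-1)‖ = (2 : ℝ) ^ L / (2 * (L : ℝ) + 1) ∧
    ‖DL L 1‖ = (2 : ℝ) ^ (2 * L) / (2 * (L : ℝ) + 1) := by
  have hden : (0:ℝ) < 2*(L:ℝ)+1 := by positivity
  have key : ∀ z : ℂ, ‖z‖ = 1 →
      (2 : ℝ) ^ L / (2 * (L : ℝ) + 1) ≤ ‖DL L z‖ ∧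
      ‖DL L z‖ ≤ (2 : ℝ) ^ (2 * L) / (2 * (L : ℝ) + 1) := by
    intro z hz
    obtain ⟨w, hw2⟩ := IsAlgClosed.exists_pow_nat_eq z (n := 2) (by norm_num)
    have hww : ‖w‖ = 1 := by
      have h : ‖w‖ ^ 2 = 1 ^ 2 := by
        rw [← norm_pow, hw2, hz]; norm_num
      exact (sq_eq_sq₀ (norm_nonneg _) one_pos.le).mp h
    rw [← hw2, abs_DL L w hww]
    obtain ⟨hlo, hhi⟩ := S_bounds L hL w hww
    constructor
    · exact (div_le_div_iff_of_pos_right hden).mpr hlo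
    · exact (div_le_div_iff_of_pos_right hden).mpr hhi
  refine ⟨?_, key, ?_, ?_⟩
  · intro z hz h0
    have := (key z hz).1
    rw [h0] at this
    simp at this
    have : (0:ℝ) < (2:ℝ)^L / (2*(L:ℝ)+1) := by positivity
    linarith [(key z hz).1, this]
  · rw [show (-1:ℂ) = I^2 from (Complex.I_sq).symm, abs_DL L I Complex.norm_I, S_val_I]
  · rw [show (1:ℂ) = 1^2 by norm_num, abs_DL L 1 norm_one, S_val_one]
end

section
/- Let L be a positive integer and define D_L(z) = (2L+1)^{−1} ∑_{n=0}^{L} C(2L+1, 2n) z^{n−L} for z ∈ ℂ \ {0}. Then for every ω ∈ ℝ one has e^{−iωL} · D_L(e^{−iω}) = e^{−iω/2 + i α_L(ω)} · D_L(e^{iω}), where α_L is the phase function defined below (equivalently, since D_L does not vanish on the unit circle, e^{−iωL} D_L(e^{−iω}) / D_L(e^{iω}) = e^{−iω/2 + i α_L(ω)}). -/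
open Complex
open scoped Classical

/-- The phase function `α_L`, with the convention `arctan(±∞) = ±π/2` at the
points `ω ∈ 2π + 4πℤ`. -/
noncomputable def alphaL (L : ℕ) (ω : ℝ) : ℝ :=
  if ∃ k : ℤ, ω = 2 * Real.pi + 4 * Real.pi * k then (-1 : ℝ) ^ L * Real.pi
  else 2 * (-1 : ℝ) ^ L * Real.arctan (Real.tan (ω / 4) ^ (2 * L + 1))

lemma sum_double (f : ℕ → ℂ) (m : ℕ) :
    ∑ k ∈ Finset.range (2 * m), f k = ∑ n ∈ Finset.range m, (f (2 * n) + f (2 * n + 1)) := by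
  induction m with
  | zero => simp
  | succ m ih =>
    rw [Finset.sum_range_succ, ← ih, show 2 * (m + 1) = (2*m + 1) + 1 by ring,
      Finset.sum_range_succ, Finset.sum_range_succ]
    ring

lemma sum_even_choose (m : ℕ) (w : ℂ) :
    2 * ∑ n ∈ Finset.range (m + 1), ((2 * m + 1).choose (2 * n) : ℂ) * w ^ (2 * n)
      = (1 + w) ^ (2 * m + 1) + (1 - w) ^ (2 * m + 1) := by
  have h1 : (1 + w) ^ (2 * m + 1)
      = ∑ k ∈ Finset.range (2 * m + 2), w ^ k * ((2 * m + 1).choose k : ℂ) := by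
    rw [add_comm]
    simpa using add_pow w 1 (2 * m + 1)
  have h2 : (1 - w) ^ (2 * m + 1)
      = ∑ k ∈ Finset.range (2 * m + 2), (-w) ^ k * ((2 * m + 1).choose k : ℂ) := by
    rw [sub_eq_add_neg, add_comm]
    simpa using add_pow (-w) 1 (2 * m + 1)
  rw [h1, h2, ← Finset.sum_add_distrib,
    show 2 * m + 2 = 2 * (m + 1) by ring, sum_double, Finset.mul_sum]
  refine Finset.sum_congr rfl fun n _ => ?_
  have he : (-w) ^ (2 * n) = w ^ (2 * n) := by
    rw [Even.neg_pow ⟨n, by ring⟩]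
  have ho : (-w) ^ (2 * n + 1) = -w ^ (2 * n + 1) := Odd.neg_pow ⟨n, by ring⟩ w
  rw [he, ho]
  ring

lemma DL_exp (L : ℕ) (u : ℂ) :
    DL L (Complex.exp u) = Complex.exp (-(u * L)) / (2 * (2 * (L : ℂ) + 1)) *
      ((1 + Complex.exp (u / 2)) ^ (2 * L + 1) + (1 - Complex.exp (u / 2)) ^ (2 * L + 1)) := by
  have key : ∀ n : ℕ, (Complex.exp u) ^ ((n : ℤ) - (L : ℤ))
      = Complex.exp (u / 2) ^ (2 * n) * Complex.exp (-(u * L)) := by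
    intro n
    rw [← Complex.exp_int_mul u ((n : ℤ) - (L : ℤ)), ← Complex.exp_nat_mul, ← Complex.exp_add]
    congr 1
    push_cast
    ring
  have h2L : (2 * (L : ℂ) + 1) ≠ 0 := by
    have : ((2 * L + 1 : ℕ) : ℂ) ≠ 0 := Nat.cast_ne_zero.mpr (by omega)
    push_cast at this
    exact this
  rw [DL]
  simp only [key]
  rw [← sum_even_choose L (Complex.exp (u / 2))]
  field_simp
  rw [← Finset.sum_mul]
  ring

lemma exp_real_I (x : ℝ) :
    Complex.exp (Complex.I * (x : ℂ)) = (Real.cos x : ℂ) + (Real.sin x : ℂ) * Complex.I := by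
  rw [mul_comm, Complex.exp_mul_I, Complex.ofReal_cos, Complex.ofReal_sin]

lemma one_add_exp (a : ℝ) :
    1 + Complex.exp (Complex.I * (a : ℂ)) =
      Complex.exp (Complex.I * (a : ℂ) / 2) * (2 * (Real.cos (a / 2) : ℂ)) := by
  have h : Complex.exp (Complex.I * (a : ℂ))
      = Complex.exp (Complex.I * (a : ℂ) / 2) * Complex.exp (Complex.I * (a : ℂ) / 2) := by
    rw [← Complex.exp_add]; ring_nf
  have h2 : Complex.I * (a : ℂ) / 2 = Complex.I * ((a / 2 : ℝ) : ℂ) := by push_cast; ring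
  have hcs := Complex.sin_sq_add_cos_sq ((a / 2 : ℝ) : ℂ)
  rw [← Complex.ofReal_cos, ← Complex.ofReal_sin] at hcs
  rw [h, h2, exp_real_I]
  linear_combination ((Real.sin (a / 2) : ℂ)) ^ 2 * Complex.I_sq - hcs

lemma one_sub_exp (a : ℝ) :
    1 - Complex.exp (Complex.I * (a : ℂ)) =
      Complex.exp (Complex.I * (a : ℂ) / 2) * (-2 * Complex.I * (Real.sin (a / 2) : ℂ)) := by
  have h : Complex.exp (Complex.I * (a : ℂ))
      = Complex.exp (Complex.I * (a : ℂ) / 2) * Complex.exp (Complex.I * (a : ℂ) / 2) := by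
    rw [← Complex.exp_add]; ring_nf
  have h2 : Complex.I * (a : ℂ) / 2 = Complex.I * ((a / 2 : ℝ) : ℂ) := by push_cast; ring
  have hcs := Complex.sin_sq_add_cos_sq ((a / 2 : ℝ) : ℂ)
  rw [← Complex.ofReal_cos, ← Complex.ofReal_sin] at hcs
  rw [h, h2, exp_real_I]
  linear_combination ((Real.sin (a / 2) : ℂ)) ^ 2 * Complex.I_sq - hcs

lemma DL_exp_real (L : ℕ) (a : ℝ) :
    DL L (Complex.exp (Complex.I * (a : ℂ))) =
      Complex.exp (-(Complex.I * a * L)) * Complex.exp (Complex.I * a * (2 * L + 1) / 4) *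
        ((4 : ℂ) ^ L / (2 * (L : ℂ) + 1)) *
        (((Real.cos (a / 4) : ℂ)) ^ (2 * L + 1)
          - Complex.I * (-1 : ℂ) ^ L * ((Real.sin (a / 4) : ℂ)) ^ (2 * L + 1)) := by
  rw [DL_exp]
  rw [show Complex.I * (a : ℂ) / 2 = Complex.I * ((a / 2 : ℝ) : ℂ) by push_cast; ring]
  rw [one_add_exp (a / 2), one_sub_exp (a / 2)]
  rw [show ((a / 2) / 2 : ℝ) = a / 4 by ring]
  have hE : Complex.exp (Complex.I * ((a / 2 : ℝ) : ℂ) / 2) ^ (2 * L + 1)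
      = Complex.exp (Complex.I * a * (2 * L + 1) / 4) := by
    rw [← Complex.exp_nat_mul]
    congr 1
    push_cast
    ring
  have hI2 : Complex.I ^ (2 * L + 1) = (-1 : ℂ) ^ L * Complex.I := by
    rw [pow_succ, pow_mul, Complex.I_sq]
  have h4 : (2 : ℂ) ^ (2 * L + 1) = 2 * 4 ^ L := by
    rw [pow_succ, pow_mul]; norm_num; ring
  have hneg2 : (-2 : ℂ) ^ (2 * L + 1) = -(2 * 4 ^ L) := by
    rw [Odd.neg_pow ⟨L, by ring⟩, h4]
  simp only [mul_pow]
  rw [hE, hI2, h4, hneg2, mul_comm (2:ℂ) (2*(L:ℂ)+1), ← div_div]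
  ring

lemma core (L : ℕ) (ω : ℝ) :
    ((Real.cos (ω / 4) : ℂ)) ^ (2 * L + 1)
        + Complex.I * (-1 : ℂ) ^ L * ((Real.sin (ω / 4) : ℂ)) ^ (2 * L + 1)
      = Complex.exp (Complex.I * ((alphaL L ω : ℝ) : ℂ)) *
        (((Real.cos (ω / 4) : ℂ)) ^ (2 * L + 1)
          - Complex.I * (-1 : ℂ) ^ L * ((Real.sin (ω / 4) : ℂ)) ^ (2 * L + 1)) := by
  have exp_real_I : ∀ x : ℝ, Complex.exp (Complex.I * (x : ℂ))
      = (Real.cos x : ℂ) + (Real.sin x : ℂ) * Complex.I := by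
    intro x
    rw [mul_comm, Complex.exp_mul_I, Complex.ofReal_cos, Complex.ofReal_sin]
  by_cases h : ∃ k : ℤ, ω = 2 * Real.pi + 4 * Real.pi * k
  · rw [alphaL, if_pos h]
    have hc : Real.cos (ω / 4) = 0 := by
      obtain ⟨k, hk⟩ := h
      rw [Real.cos_eq_zero_iff]
      exact ⟨k, by rw [hk]; ring⟩
    have hexp : Complex.exp (Complex.I * (((-1 : ℝ) ^ L * Real.pi : ℝ) : ℂ)) = -1 := by
      rcases Nat.even_or_odd L with he | ho
      · rw [he.neg_one_pow, one_mul, mul_comm, Complex.exp_pi_mul_I]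
      · rw [ho.neg_one_pow, show Complex.I * (((-1 : ℝ) * Real.pi : ℝ) : ℂ)
              = -((Real.pi : ℂ) * Complex.I) by push_cast; ring,
          Complex.exp_neg, Complex.exp_pi_mul_I]
        norm_num
    rw [hexp, hc]
    rw [show ((0 : ℝ) : ℂ) = 0 by norm_num, zero_pow (by omega : 2 * L + 1 ≠ 0)]
    ring
  · rw [alphaL, if_neg h]
    have hc : Real.cos (ω / 4) ≠ 0 := by
      intro hc0
      rw [Real.cos_eq_zero_iff] at hc0
      obtain ⟨n, hn⟩ := hc0
      exact h ⟨n, by linarith⟩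
    set t : ℝ := Real.tan (ω / 4) ^ (2 * L + 1) with ht
    set a : ℝ := Real.arctan t with ha
    have hden : (0 : ℝ) < 1 + t ^ 2 := by positivity
    have hcos2 : Real.cos (2 * a) = (1 - t ^ 2) / (1 + t ^ 2) := by
      rw [Real.cos_two_mul, ha, Real.cos_sq_arctan]
      field_simp
      ring
    have hsin2 : Real.sin (2 * a) = 2 * t / (1 + t ^ 2) := by
      rw [Real.sin_two_mul, ha, Real.sin_arctan, Real.cos_arctan]
      have hs : Real.sqrt (1 + t ^ 2) * Real.sqrt (1 + t ^ 2) = 1 + t ^ 2 :=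
        Real.mul_self_sqrt hden.le
      have hsq : Real.sqrt (1 + t ^ 2) ≠ 0 := by positivity
      field_simp
      rw [Real.sq_sqrt hden.le]
    have hB : ((Real.sin (ω / 4) : ℂ)) ^ (2 * L + 1)
        = ((t : ℝ) : ℂ) * ((Real.cos (ω / 4) : ℂ)) ^ (2 * L + 1) := by
      have hsc : Real.sin (ω / 4) = Real.tan (ω / 4) * Real.cos (ω / 4) := by
        rw [Real.tan_eq_sin_div_cos]; field_simp
      rw [hsc, ht]
      push_cast
      ring
    have hden' : ((1 : ℂ) + ((t : ℝ) : ℂ) ^ 2) ≠ 0 := by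
      have : ((1 + t ^ 2 : ℝ) : ℂ) ≠ 0 := by exact_mod_cast hden.ne'
      push_cast at this
      exact this
    rcases Nat.even_or_odd L with he | ho
    · rw [exp_real_I, he.neg_one_pow (α := ℝ), he.neg_one_pow (α := ℂ), hB]
      rw [show (2 * (1:ℝ) * a) = 2 * a by ring, hcos2, hsin2]
      push_cast
      field_simp
      linear_combination (2 * ((t : ℝ) : ℂ) ^ 2 * Complex.cos ((ω : ℂ) / 4) ^ (2 * L + 1)) *
        Complex.I_sq
    · rw [exp_real_I, ho.neg_one_pow (α := ℝ), ho.neg_one_pow (α := ℂ), hB]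
      rw [show (2 * (-1:ℝ) * a) = -(2 * a) by ring, Real.cos_neg, Real.sin_neg, hcos2, hsin2]
      push_cast
      field_simp
      linear_combination (2 * ((t : ℝ) : ℂ) ^ 2 * Complex.cos ((ω : ℂ) / 4) ^ (2 * L + 1)) *
        Complex.I_sq


/-- Phase of the allpass ratio `e^{-iωL} D_L(e^{-iω}) / D_L(e^{iω})`. -/
theorem DL_allpass_phase (L : ℕ) (hL : 0 < L) (ω : ℝ) :
    Complex.exp (-(Complex.I * (ω : ℂ) * (L : ℂ))) *
        DL L (Complex.exp (-(Complex.I * (ω : ℂ)))) =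
      Complex.exp (-(Complex.I * (ω : ℂ)) / 2 + Complex.I * (alphaL L ω : ℂ)) *
        DL L (Complex.exp (Complex.I * (ω : ℂ))) := by
  have h1 := DL_exp_real L (-ω)
  have h2 := DL_exp_real L ω
  rw [show ((-ω) / 4 : ℝ) = -(ω / 4) by ring, Real.cos_neg, Real.sin_neg,
    Complex.ofReal_neg (Real.sin (ω / 4)),
    Odd.neg_pow ⟨L, by ring⟩ ((Real.sin (ω / 4) : ℂ)), Complex.ofReal_neg ω,
    show Complex.I * -(ω : ℂ) = -(Complex.I * (ω : ℂ)) by ring] at h1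
  rw [h1, h2]
  have hexp : Complex.exp (-(Complex.I * (ω : ℂ) * (L : ℂ))) *
        Complex.exp (-(-(Complex.I * (ω : ℂ)) * (L : ℂ))) *
        Complex.exp (-(Complex.I * (ω : ℂ)) * (2 * (L : ℂ) + 1) / 4) *
        Complex.exp (Complex.I * ((alphaL L ω : ℝ) : ℂ))
      = Complex.exp (-(Complex.I * (ω : ℂ)) / 2 + Complex.I * ((alphaL L ω : ℝ) : ℂ)) *
        Complex.exp (-(Complex.I * (ω : ℂ) * (L : ℂ))) *
        Complex.exp (Complex.I * (ω : ℂ) * (2 * (L : ℂ) + 1) / 4) := by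
    rw [← Complex.exp_add, ← Complex.exp_add, ← Complex.exp_add, ← Complex.exp_add,
      ← Complex.exp_add]
    congr 1
    ring
  linear_combination
    (Complex.exp (-(Complex.I * (ω : ℂ) * (L : ℂ))) *
      Complex.exp (-(-(Complex.I * (ω : ℂ)) * (L : ℂ))) *
      Complex.exp (-(Complex.I * (ω : ℂ)) * (2 * (L : ℂ) + 1) / 4) *
      ((4 : ℂ) ^ L / (2 * (L : ℂ) + 1))) * core L ω +
    (((4 : ℂ) ^ L / (2 * (L : ℂ) + 1)) *
      (((Real.cos (ω / 4) : ℂ)) ^ (2 * L + 1)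
        - Complex.I * (-1 : ℂ) ^ L * ((Real.sin (ω / 4) : ℂ)) ^ (2 * L + 1))) * hexp
end

section
/- Let L be a positive integer, let F(z) = ∑_{n=0}^{N} f(n) z^{−n} with real coefficients f(0), …, f(N) and F(1) = √2 (2L+1) 2^{−2L}, and set H_0(z) = F(z) D_L(z) and G_0(z) = F(z) D_L(1/z) z^{−L} for z ∈ ℂ \ {0}. Assume that for every ω ∈ ℝ the infinite product φ̂_H(ω) = ∏_{j=1}^{∞} 2^{−1/2} H_0(e^{i 2^{−j} ω}) converges (is multipliable), and define φ̂_G analogously from G_0. Set H_1(z) = z^{−1} H_0(−z^{−1}) and G_1(z) = z^{−1} G_0(−z^{−1}), and define ψ̂_H(ω) = 2^{−1/2} H_1(e^{iω/2}) φ̂_H(ω/2) and ψ̂_G(ω) = 2^{−1/2} G_1(e^{iω/2}) φ̂_G(ω/2). Then for every ω ∈ ℝ, ψ̂_G(ω) = i · e^{i η_L(ω)} · ψ̂_H(ω). -/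
open Complex
open scoped Classical

/-- The phase function `β_L(ω) = ∑_{j=1}^∞ α_L(2^{-j} ω)`. -/
noncomputable def betaL (L : ℕ) (ω : ℝ) : ℝ :=
  ∑' j : ℕ, alphaL L (ω / 2 ^ (j + 1))

/-- The phase function `η_L(ω) = -α_L(ω/2 + π) + β_L(ω/2)`. -/
noncomputable def etaL (L : ℕ) (ω : ℝ) : ℝ :=
  -alphaL L (ω / 2 + Real.pi) + betaL L (ω / 2)

section Aux

/-- even part of binomial expansion -/
lemma CF_sumEven (m : ℕ) (w : ℂ) :
    (1 + w) ^ (2 * m + 1) + (1 - w) ^ (2 * m + 1)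
      = 2 * ∑ n ∈ Finset.range (m + 1), (Nat.choose (2 * m + 1) (2 * n) : ℂ) * w ^ (2 * n) := by
  have h1 : ∀ v : ℂ, (1 + v) ^ (2 * m + 1)
      = ∑ k ∈ Finset.range (2 * m + 1 + 1), (Nat.choose (2 * m + 1) k : ℂ) * v ^ k := by
    intro v
    rw [add_comm, add_pow]
    exact Finset.sum_congr rfl fun k _ => by rw [one_pow, mul_one, mul_comm]
  have h2 : (1 : ℂ) - w = 1 + (-w) := by ring
  rw [h1 w, h2, h1 (-w), ← Finset.sum_add_distrib]
  have h3 : ∀ k ∈ Finset.range (2 * m + 1 + 1),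
      (Nat.choose (2 * m + 1) k : ℂ) * w ^ k + (Nat.choose (2 * m + 1) k : ℂ) * (-w) ^ k
        = if Even k then 2 * ((Nat.choose (2 * m + 1) k : ℂ) * w ^ k) else 0 := by
    intro k _
    rcases Nat.even_or_odd k with h | h
    · rw [h.neg_pow, if_pos h]; ring
    · rw [h.neg_pow, if_neg (Nat.not_even_iff_odd.mpr h)]; ring
  rw [Finset.sum_congr rfl h3, ← Finset.sum_filter, Finset.mul_sum]
  refine Finset.sum_nbij' (fun k => k / 2) (fun n => 2 * n) ?_ ?_ ?_ ?_ ?_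
  · intro k hk
    simp only [Finset.mem_filter, Finset.mem_range] at hk
    simp only [Finset.mem_range]
    omega
  · intro n hn
    simp only [Finset.mem_range] at hn
    simp only [Finset.mem_filter, Finset.mem_range]
    exact ⟨by omega, even_two_mul n⟩
  · intro k hk
    simp only [Finset.mem_filter, Finset.mem_range] at hk
    exact Nat.two_mul_div_two_of_even hk.2
  · intro n _
    show 2 * n / 2 = n
    omega
  · intro k hk
    simp only [Finset.mem_filter, Finset.mem_range] at hk
    rw [Nat.two_mul_div_two_of_even hk.2]

lemma CF_one_add_exp (x : ℝ) :
    1 + Complex.exp (Complex.I * ((x : ℝ) : ℂ))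
      = 2 * (Real.cos (x / 2) : ℂ) * Complex.exp (Complex.I * ((x / 2 : ℝ) : ℂ)) := by
  have hx : Complex.I * ((x : ℝ) : ℂ)
      = Complex.I * ((x / 2 : ℝ) : ℂ) + Complex.I * ((x / 2 : ℝ) : ℂ) := by push_cast; ring
  rw [hx, Complex.exp_add, Complex.ofReal_cos, Complex.cos,
    show ((x / 2 : ℝ) : ℂ) * Complex.I = Complex.I * ((x / 2 : ℝ) : ℂ) by ring,
    show -((x / 2 : ℝ) : ℂ) * Complex.I = -(Complex.I * ((x / 2 : ℝ) : ℂ)) by ring,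
    Complex.exp_neg]
  have h := Complex.exp_ne_zero (Complex.I * ((x / 2 : ℝ) : ℂ))
  field_simp
  try ring
  try (rw [Complex.I_sq]; ring)

lemma CF_one_sub_exp (x : ℝ) :
    1 - Complex.exp (Complex.I * ((x : ℝ) : ℂ))
      = -2 * Complex.I * (Real.sin (x / 2) : ℂ) * Complex.exp (Complex.I * ((x / 2 : ℝ) : ℂ)) := by
  have hx : Complex.I * ((x : ℝ) : ℂ)
      = Complex.I * ((x / 2 : ℝ) : ℂ) + Complex.I * ((x / 2 : ℝ) : ℂ) := by push_cast; ring
  rw [hx, Complex.exp_add, Complex.ofReal_sin, Complex.sin,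
    show ((x / 2 : ℝ) : ℂ) * Complex.I = Complex.I * ((x / 2 : ℝ) : ℂ) by ring,
    show -((x / 2 : ℝ) : ℂ) * Complex.I = -(Complex.I * ((x / 2 : ℝ) : ℂ)) by ring,
    Complex.exp_neg]
  have h := Complex.exp_ne_zero (Complex.I * ((x / 2 : ℝ) : ℂ))
  field_simp
  try ring
  try (rw [Complex.I_sq]; ring)

lemma CF_arctan_exp (u : ℝ) :
    Complex.exp (Complex.I * ((2 * Real.arctan u : ℝ) : ℂ)) * (1 - Complex.I * (u : ℂ))
      = 1 + Complex.I * (u : ℂ) := by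
  have h0 : (0 : ℝ) < 1 + u ^ 2 := by positivity
  have hsq : Real.sqrt (1 + u ^ 2) ^ 2 = 1 + u ^ 2 := Real.sq_sqrt h0.le
  have hc : Real.cos (2 * Real.arctan u) = (1 - u ^ 2) / (1 + u ^ 2) := by
    rw [Real.cos_two_mul, Real.cos_arctan, div_pow, one_pow, hsq]
    field_simp
    ring
  have hs : Real.sin (2 * Real.arctan u) = 2 * u / (1 + u ^ 2) := by
    rw [Real.sin_two_mul, Real.sin_arctan, Real.cos_arctan,
      show 2 * (u / Real.sqrt (1 + u ^ 2)) * (1 / Real.sqrt (1 + u ^ 2))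
          = 2 * u / (Real.sqrt (1 + u ^ 2) * Real.sqrt (1 + u ^ 2)) by ring,
      Real.mul_self_sqrt h0.le]
  have h1 : Complex.exp (Complex.I * ((2 * Real.arctan u : ℝ) : ℂ))
      = ((Real.cos (2 * Real.arctan u) : ℝ) : ℂ) + ((Real.sin (2 * Real.arctan u) : ℝ) : ℂ) * Complex.I := by
    rw [mul_comm, Complex.exp_mul_I, Complex.ofReal_cos, Complex.ofReal_sin]
  rw [h1, hc, hs]
  have h0c : ((1 : ℂ) + (u : ℂ) ^ 2) ≠ 0 := by
    have : ((1 + u ^ 2 : ℝ) : ℂ) ≠ 0 := by exact_mod_cast h0.ne'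
    push_cast at this
    exact this
  push_cast
  field_simp
  try ring
  try (rw [Complex.I_sq]; ring)

end Aux

section Aux2

lemma CF_exp_eps_pi (L : ℕ) :
    Complex.exp (Complex.I * (((-1 : ℝ) ^ L * Real.pi : ℝ) : ℂ)) = -1 := by
  rcases Nat.even_or_odd L with hL | hL
  · rw [hL.neg_one_pow, one_mul, show Complex.I * ((Real.pi : ℝ) : ℂ) = (Real.pi : ℂ) * Complex.I by ring,
      Complex.exp_pi_mul_I]
  · rw [hL.neg_one_pow]
    rw [show (((-1 : ℝ) * Real.pi : ℝ) : ℂ) = -(Real.pi : ℂ) by push_cast; ring]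
    rw [show Complex.I * -(Real.pi : ℂ) = -((Real.pi : ℂ) * Complex.I) by ring, Complex.exp_neg,
      Complex.exp_pi_mul_I]
    norm_num

lemma CF_key (L : ℕ) (θ : ℝ) :
    Complex.exp (Complex.I * ((alphaL L θ : ℝ) : ℂ)) *
        ((Real.cos (θ / 4) : ℂ) ^ (2 * L + 1)
          - (-1 : ℂ) ^ L * Complex.I * (Real.sin (θ / 4) : ℂ) ^ (2 * L + 1))
      = (Real.cos (θ / 4) : ℂ) ^ (2 * L + 1)
          + (-1 : ℂ) ^ L * Complex.I * (Real.sin (θ / 4) : ℂ) ^ (2 * L + 1) := by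
  rw [alphaL]
  split_ifs with h
  · obtain ⟨k, hk⟩ := h
    have hc : Real.cos (θ / 4) = 0 := by
      rw [hk, show (2 * Real.pi + 4 * Real.pi * (k : ℝ)) / 4 = (2 * (k : ℝ) + 1) * Real.pi / 2 by ring]
      exact Real.cos_eq_zero_iff.mpr ⟨k, rfl⟩
    rw [hc, CF_exp_eps_pi L]
    push_cast
    ring
  · have hc : Real.cos (θ / 4) ≠ 0 := by
      intro hc0
      obtain ⟨k, hk⟩ := Real.cos_eq_zero_iff.mp hc0
      exact h ⟨k, by linarith [hk]⟩
    set t := Real.tan (θ / 4) with ht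
    set v := (-1 : ℝ) ^ L * t ^ (2 * L + 1) with hv
    have hα : 2 * (-1 : ℝ) ^ L * Real.arctan (t ^ (2 * L + 1)) = 2 * Real.arctan v := by
      rcases Nat.even_or_odd L with hL | hL
      · rw [hL.neg_one_pow, hv, hL.neg_one_pow]; ring
      · rw [hL.neg_one_pow, hv, hL.neg_one_pow, show (-1 : ℝ) * t ^ (2 * L + 1) = -(t ^ (2 * L + 1)) by ring,
          Real.arctan_neg]
        ring
    rw [hα]
    have hst : (Real.sin (θ / 4) : ℂ) ^ (2 * L + 1)
        = (t : ℂ) ^ (2 * L + 1) * (Real.cos (θ / 4) : ℂ) ^ (2 * L + 1) := by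
      have : Real.sin (θ / 4) = t * Real.cos (θ / 4) := by
        rw [ht, Real.tan_eq_sin_div_cos]; field_simp
      rw [this]; push_cast; ring
    rw [hst]
    have hvc : ((-1 : ℂ)) ^ L * (t : ℂ) ^ (2 * L + 1) = ((v : ℝ) : ℂ) := by
      rw [hv]; push_cast; ring
    have harct := CF_arctan_exp v
    set E := Complex.exp (Complex.I * ((2 * Real.arctan v : ℝ) : ℂ)) with hE
    have hcne : (Real.cos (θ / 4) : ℂ) ^ (2 * L + 1) ≠ 0 :=
      pow_ne_zero _ (by exact_mod_cast hc)
    linear_combination (Real.cos (θ / 4) : ℂ) ^ (2 * L + 1) * harct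
      - Complex.I * (Real.cos (θ / 4) : ℂ) ^ (2 * L + 1) * (E + 1) * hvc

lemma CF_I_pow (L : ℕ) : Complex.I ^ (2 * L + 1) = (-1 : ℂ) ^ L * Complex.I := by
  rw [pow_succ, pow_mul, Complex.I_sq]

lemma CF_star (L : ℕ) (θ : ℝ) :
    (1 + Complex.exp (Complex.I * ((θ / 2 : ℝ) : ℂ))) ^ (2 * L + 1)
        - (1 - Complex.exp (Complex.I * ((θ / 2 : ℝ) : ℂ))) ^ (2 * L + 1)
      = Complex.exp (Complex.I * ((alphaL L θ : ℝ) : ℂ)) *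
          ((1 + Complex.exp (Complex.I * ((θ / 2 : ℝ) : ℂ))) ^ (2 * L + 1)
            + (1 - Complex.exp (Complex.I * ((θ / 2 : ℝ) : ℂ))) ^ (2 * L + 1)) := by
  have hM : Odd (2 * L + 1) := odd_two_mul_add_one L
  rw [CF_one_add_exp (θ / 2), CF_one_sub_exp (θ / 2)]
  rw [show θ / 2 / 2 = θ / 4 by ring]
  set c : ℂ := (Real.cos (θ / 4) : ℂ)
  set s : ℂ := (Real.sin (θ / 4) : ℂ)
  set e : ℂ := Complex.exp (Complex.I * ((θ / 4 : ℝ) : ℂ))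
  have e1 : (2 * c * e) ^ (2 * L + 1) = 2 ^ (2 * L + 1) * c ^ (2 * L + 1) * e ^ (2 * L + 1) := by
    rw [mul_pow, mul_pow]
  have e2 : (-2 * Complex.I * s * e) ^ (2 * L + 1)
      = -(2 ^ (2 * L + 1)) * ((-1 : ℂ) ^ L * Complex.I) * s ^ (2 * L + 1) * e ^ (2 * L + 1) := by
    rw [mul_pow, mul_pow, mul_pow, hM.neg_pow, CF_I_pow]
  rw [e1, e2]
  have hkey := CF_key L θ
  linear_combination (-((2 : ℂ) ^ (2 * L + 1) * e ^ (2 * L + 1))) * hkey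

end Aux2

section Aux3

lemma CF_DL_sq (L : ℕ) (v : ℂ) (hv : v ≠ 0) :
    DL L (v ^ 2) = (1 / (2 * (L : ℂ) + 1)) * (v ^ (2 * L))⁻¹ *
      ∑ n ∈ Finset.range (L + 1), (Nat.choose (2 * L + 1) (2 * n) : ℂ) * v ^ (2 * n) := by
  rw [DL, mul_assoc, Finset.mul_sum, ← Finset.mul_sum]
  congr 1
  rw [Finset.mul_sum]
  refine Finset.sum_congr rfl fun n hn => ?_
  have hzp : (v ^ 2) ^ ((n : ℤ) - (L : ℤ)) = (v ^ (2 * L))⁻¹ * v ^ (2 * n) := by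
    rw [zpow_sub₀ (pow_ne_zero 2 hv), zpow_natCast, zpow_natCast, ← pow_mul, ← pow_mul,
      div_eq_mul_inv]
    ring
  rw [hzp]
  ring

lemma CF_ratio (L : ℕ) (θ : ℝ) :
    DL L (1 / Complex.exp (Complex.I * ((θ : ℝ) : ℂ))) *
        (Complex.exp (Complex.I * ((θ : ℝ) : ℂ))) ^ (-(L : ℤ))
      = Complex.exp (Complex.I * ((alphaL L θ : ℝ) : ℂ)) *
          Complex.exp (Complex.I * ((-(θ / 2) : ℝ) : ℂ)) *
          DL L (Complex.exp (Complex.I * ((θ : ℝ) : ℂ))) := by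
  set w : ℂ := Complex.exp (Complex.I * ((θ / 2 : ℝ) : ℂ)) with hw
  have hw0 : w ≠ 0 := Complex.exp_ne_zero _
  have hz : Complex.exp (Complex.I * ((θ : ℝ) : ℂ)) = w ^ 2 := by
    rw [hw, ← Complex.exp_nat_mul]
    congr 1
    push_cast
    ring
  set S : ℂ := ∑ n ∈ Finset.range (L + 1), (Nat.choose (2 * L + 1) (2 * n) : ℂ) * w ^ (2 * n) with hS
  set S' : ℂ := ∑ n ∈ Finset.range (L + 1), (Nat.choose (2 * L + 1) (2 * n) : ℂ) * (w⁻¹) ^ (2 * n) with hS'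
  have hDLz : DL L (Complex.exp (Complex.I * ((θ : ℝ) : ℂ)))
      = (1 / (2 * (L : ℂ) + 1)) * (w ^ (2 * L))⁻¹ * S := by
    rw [hz]; exact CF_DL_sq L w hw0
  have hDLinv : DL L (1 / Complex.exp (Complex.I * ((θ : ℝ) : ℂ)))
      = (1 / (2 * (L : ℂ) + 1)) * w ^ (2 * L) * S' := by
    rw [hz, show (1 : ℂ) / w ^ 2 = (w⁻¹) ^ 2 by rw [inv_pow]; rw [one_div],
      CF_DL_sq L w⁻¹ (inv_ne_zero hw0), inv_pow, inv_inv]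
  have hzpow : (Complex.exp (Complex.I * ((θ : ℝ) : ℂ))) ^ (-(L : ℤ)) = (w ^ (2 * L))⁻¹ := by
    rw [hz, zpow_neg, zpow_natCast, ← pow_mul]
  have h2S : (2 : ℂ) * S = (1 + w) ^ (2 * L + 1) + (1 - w) ^ (2 * L + 1) := (CF_sumEven L w).symm
  have h2S' : (2 : ℂ) * S' = (1 + w⁻¹) ^ (2 * L + 1) + (1 - w⁻¹) ^ (2 * L + 1) := (CF_sumEven L w⁻¹).symm
  have hM : Odd (2 * L + 1) := odd_two_mul_add_one L
  have hS'eq : w ^ (2 * L + 1) * ((2 : ℂ) * S')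
      = Complex.exp (Complex.I * ((alphaL L θ : ℝ) : ℂ)) * ((2 : ℂ) * S) := by
    rw [h2S']
    have e1 : w ^ (2 * L + 1) * ((1 + w⁻¹) ^ (2 * L + 1) + (1 - w⁻¹) ^ (2 * L + 1))
        = (1 + w) ^ (2 * L + 1) - (1 - w) ^ (2 * L + 1) := by
      rw [mul_add, ← mul_pow, ← mul_pow]
      rw [show w * (1 + w⁻¹) = 1 + w by field_simp; try ring]
      rw [show w * (1 - w⁻¹) = -(1 - w) by field_simp; try ring]
      rw [hM.neg_pow]
      ring
    rw [e1, CF_star L θ, h2S]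
  have hwinv : Complex.exp (Complex.I * ((-(θ / 2) : ℝ) : ℂ)) = w⁻¹ := by
    rw [hw, ← Complex.exp_neg]
    congr 1
    push_cast
    ring
  rw [hDLinv, hzpow, hDLz, hwinv]
  have hS'v : S' = w⁻¹ * (w ^ (2 * L))⁻¹ * Complex.exp (Complex.I * ((alphaL L θ : ℝ) : ℂ)) * S := by
    have hw2 : w ^ (2 * L + 1) ≠ 0 := pow_ne_zero _ hw0
    field_simp at hS'eq ⊢
    rw [pow_succ] at hS'eq
    linear_combination hS'eq
  rw [hS'v]
  have h2L1 : (2 * (L : ℂ) + 1) ≠ 0 := by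
    have h' : ((2 * L + 1 : ℕ) : ℂ) ≠ 0 := Nat.cast_ne_zero.mpr (by omega)
    push_cast at h'
    exact h'
  have hcancel : w ^ (2 * L) * (w ^ (2 * L))⁻¹ = 1 := mul_inv_cancel₀ (pow_ne_zero _ hw0)
  linear_combination (1 / (2 * (L : ℂ) + 1)) * w⁻¹ * (w ^ (2 * L))⁻¹ *
    Complex.exp (Complex.I * ((alphaL L θ : ℝ) : ℂ)) * S * hcancel

end Aux3

section Aux4

lemma CF_alpha_neg_exp (L : ℕ) (x : ℝ) :
    Complex.exp (Complex.I * ((alphaL L (-x) : ℝ) : ℂ))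
      = (Complex.exp (Complex.I * ((alphaL L x : ℝ) : ℂ)))⁻¹ := by
  have hiff : (∃ k : ℤ, -x = 2 * Real.pi + 4 * Real.pi * k) ↔
      (∃ k : ℤ, x = 2 * Real.pi + 4 * Real.pi * k) := by
    constructor <;> rintro ⟨k, hk⟩ <;> refine ⟨-1 - k, ?_⟩ <;> push_cast <;> linarith [hk]
  rw [alphaL, alphaL, if_congr hiff rfl rfl]
  split_ifs with h
  · rw [CF_exp_eps_pi L]
    norm_num
  · rw [← Complex.exp_neg]
    congr 1
    rw [show -x / 4 = -(x / 4) by ring, Real.tan_neg, (odd_two_mul_add_one L).neg_pow,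
      Real.arctan_neg]
    push_cast
    ring

lemma CF_abs_arctan_le (y : ℝ) : |Real.arctan y| ≤ |y| := by
  have key : ∀ z : ℝ, 0 ≤ z → Real.arctan z ≤ z := by
    intro z hz
    have hnn : 0 ≤ Real.arctan z := by
      rw [← Real.arctan_zero]
      exact Real.arctan_strictMono.monotone hz
    calc Real.arctan z ≤ Real.tan (Real.arctan z) :=
          Real.le_tan hnn (Real.arctan_lt_pi_div_two z)
      _ = z := Real.tan_arctan z
  rcases le_or_gt 0 y with h | h
  · have hnn : 0 ≤ Real.arctan y := by
      rw [← Real.arctan_zero]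
      exact Real.arctan_strictMono.monotone h
    rw [_root_.abs_of_nonneg hnn, _root_.abs_of_nonneg h]
    exact key y h
  · have hk := key (-y) (by linarith)
    rw [Real.arctan_neg] at hk
    have hnp : Real.arctan y ≤ 0 := by
      rw [← Real.arctan_zero]
      exact Real.arctan_strictMono.monotone h.le
    rw [_root_.abs_of_neg h, _root_.abs_of_nonpos hnp]
    linarith

lemma CF_alpha_abs_le (L : ℕ) {x : ℝ} (hx : |x| ≤ 1) : |alphaL L x| ≤ |x| := by
  have hpi := Real.pi_gt_three
  have hne : ¬∃ k : ℤ, x = 2 * Real.pi + 4 * Real.pi * k := by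
    rintro ⟨k, hk⟩
    have hk0 : (1 + 2 * k : ℤ) ≠ 0 := by omega
    have h1 : (1 : ℝ) ≤ |((1 + 2 * k : ℤ) : ℝ)| := by
      rw [← Int.cast_abs]
      exact_mod_cast Int.one_le_abs hk0
    have h2 : |x| = 2 * Real.pi * |((1 + 2 * k : ℤ) : ℝ)| := by
      rw [hk, show 2 * Real.pi + 4 * Real.pi * (k : ℝ) = 2 * Real.pi * ((1 + 2 * k : ℤ) : ℝ) by
        push_cast; ring, abs_mul, abs_of_pos (by positivity)]
    nlinarith
  rw [alphaL, if_neg hne]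
  have hx4 : |x / 4| ≤ 1 / 4 := by
    rw [abs_div, abs_of_pos (by norm_num : (0 : ℝ) < 4)]
    linarith
  have hcos : (1 : ℝ) / 2 ≤ Real.cos (x / 4) := by
    have hb := Real.one_sub_sq_div_two_le_cos (x := x / 4)
    have hsq : (x / 4) ^ 2 ≤ (1 / 4 : ℝ) ^ 2 := by
      rw [← _root_.sq_abs]
      exact pow_le_pow_left₀ (abs_nonneg _) hx4 2
    nlinarith
  have htan : |Real.tan (x / 4)| ≤ |x| / 2 := by
    rw [Real.tan_eq_sin_div_cos, abs_div]
    have hc : |Real.cos (x / 4)| = Real.cos (x / 4) := abs_of_pos (by linarith)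
    calc |Real.sin (x / 4)| / |Real.cos (x / 4)| ≤ |x / 4| / (1 / 2) := by
          apply div_le_div₀ (abs_nonneg _) Real.abs_sin_le_abs (by norm_num)
          rw [hc]; exact hcos
      _ = |x| / 2 := by rw [abs_div, abs_of_pos (by norm_num : (0 : ℝ) < 4)]; ring
  have habs : |2 * (-1 : ℝ) ^ L * Real.arctan (Real.tan (x / 4) ^ (2 * L + 1))|
      = 2 * |Real.arctan (Real.tan (x / 4) ^ (2 * L + 1))| := by
    rw [abs_mul, abs_mul, _root_.abs_pow, abs_neg, abs_one, one_pow]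
    norm_num
  rw [habs]
  have h1 := CF_abs_arctan_le (Real.tan (x / 4) ^ (2 * L + 1))
  have h2 : |Real.tan (x / 4) ^ (2 * L + 1)| ≤ (|x| / 2) ^ (2 * L + 1) := by
    rw [_root_.abs_pow]
    exact pow_le_pow_left₀ (abs_nonneg _) htan _
  have h3 : (|x| / 2) ^ (2 * L + 1) ≤ |x| / 2 := by
    apply pow_le_of_le_one (by positivity) (by linarith [abs_nonneg x]) (by omega)
  linarith

lemma CF_alpha_summable (L : ℕ) (ω : ℝ) :
    Summable fun j : ℕ => alphaL L (ω / 2 ^ (j + 1)) := by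
  obtain ⟨J, hJ⟩ := pow_unbounded_of_one_lt (y := (2 : ℝ)) |ω| one_lt_two
  rw [← summable_nat_add_iff J]
  refine Summable.of_norm_bounded (g := fun j => (1 / 2 : ℝ) ^ j)
    (summable_geometric_of_lt_one (by norm_num) (by norm_num)) ?_
  intro j
  have h2 : (0 : ℝ) < 2 ^ (j + J + 1) := by positivity
  have hx : |ω / 2 ^ (j + J + 1)| ≤ (1 / 2 : ℝ) ^ (j + 1) := by
    rw [abs_div, abs_of_pos h2, div_le_iff₀ h2]
    calc |ω| ≤ 2 ^ J := hJ.le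
      _ = (1 / 2 : ℝ) ^ (j + 1) * 2 ^ (j + J + 1) := by
          rw [div_pow, one_pow, show j + J + 1 = (j + 1) + J by omega, pow_add]
          field_simp
          ring
  have hx1 : |ω / 2 ^ (j + J + 1)| ≤ 1 :=
    le_trans hx (pow_le_one₀ (by norm_num) (by norm_num))
  have hb := CF_alpha_abs_le L hx1
  calc ‖alphaL L (ω / 2 ^ (j + J + 1))‖ = |alphaL L (ω / 2 ^ (j + J + 1))| := rfl
    _ ≤ |ω / 2 ^ (j + J + 1)| := hb
    _ ≤ (1 / 2 : ℝ) ^ (j + 1) := hx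
    _ ≤ (1 / 2 : ℝ) ^ j := pow_le_pow_of_le_one (by norm_num) (by norm_num) (by omega)

lemma CF_geo_hasSum (ω : ℝ) :
    HasSum (fun j : ℕ => -(ω / 2 ^ (j + 1) / 2)) (-(ω / 2)) := by
  have h := hasSum_geometric_of_lt_one (r := 1 / 2) (by norm_num) (by norm_num)
  have h2 := h.mul_left (-(ω / 4))
  have hfun : (fun j : ℕ => -(ω / 2 ^ (j + 1) / 2)) = fun j : ℕ => -(ω / 4) * (1 / 2) ^ j := by
    funext j
    rw [pow_succ, one_div, inv_pow]
    ring
  rw [hfun, show -(ω / 2) = -(ω / 4) * (1 - 1 / 2)⁻¹ by norm_num; try ring]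
  exact h2

lemma CF_hasProd_exp {c : ℕ → ℝ} {s : ℝ} (h : HasSum c s) :
    HasProd (fun j => Complex.exp (Complex.I * ((c j : ℝ) : ℂ)))
      (Complex.exp (Complex.I * ((s : ℝ) : ℂ))) := by
  have h1 : HasSum (fun j => ((c j : ℝ) : ℂ)) ((s : ℝ) : ℂ) := Complex.hasSum_ofReal.mpr h
  have h2 := (h1.mul_left Complex.I).cexp
  simpa [Function.comp_def] using h2

end Aux4

/-- Relation between the mother wavelets `ψ̂_G` and `ψ̂_H` of a
common-factor filter pair. -/
theorem commonFactor_wavelet_relation (L : ℕ) (hL : 0 < L) (N : ℕ) (f : ℕ → ℝ)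
    (F H0 G0 H1 G1 : ℂ → ℂ)
    (hF : ∀ z : ℂ, z ≠ 0 → F z = ∑ n ∈ Finset.range (N + 1), (f n : ℂ) * z ^ (-(n : ℤ)))
    (hF1 : F 1 = (Real.sqrt 2 : ℂ) * (2 * (L : ℂ) + 1) * 2 ^ (-(2 * (L : ℤ))))
    (hH0 : ∀ z : ℂ, z ≠ 0 → H0 z = F z * DL L z)
    (hG0 : ∀ z : ℂ, z ≠ 0 → G0 z = F z * DL L (1 / z) * z ^ (-(L : ℤ)))
    (hH1 : ∀ z : ℂ, z ≠ 0 → H1 z = z⁻¹ * H0 (-z⁻¹))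
    (hG1 : ∀ z : ℂ, z ≠ 0 → G1 z = z⁻¹ * G0 (-z⁻¹))
    (phiH phiG psiH psiG : ℝ → ℂ)
    (hMulH : ∀ ω : ℝ, Multipliable fun j : ℕ =>
      (1 / (Real.sqrt 2 : ℂ)) * H0 (Complex.exp (Complex.I * ((ω / 2 ^ (j + 1) : ℝ) : ℂ))))
    (hMulG : ∀ ω : ℝ, Multipliable fun j : ℕ =>
      (1 / (Real.sqrt 2 : ℂ)) * G0 (Complex.exp (Complex.I * ((ω / 2 ^ (j + 1) : ℝ) : ℂ))))
    (hphiH : ∀ ω : ℝ, phiH ω = ∏' j : ℕ,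
      (1 / (Real.sqrt 2 : ℂ)) * H0 (Complex.exp (Complex.I * ((ω / 2 ^ (j + 1) : ℝ) : ℂ))))
    (hphiG : ∀ ω : ℝ, phiG ω = ∏' j : ℕ,
      (1 / (Real.sqrt 2 : ℂ)) * G0 (Complex.exp (Complex.I * ((ω / 2 ^ (j + 1) : ℝ) : ℂ))))
    (hpsiH : ∀ ω : ℝ, psiH ω =
      (1 / (Real.sqrt 2 : ℂ)) * H1 (Complex.exp (Complex.I * ((ω / 2 : ℝ) : ℂ))) * phiH (ω / 2))
    (hpsiG : ∀ ω : ℝ, psiG ω =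
      (1 / (Real.sqrt 2 : ℂ)) * G1 (Complex.exp (Complex.I * ((ω / 2 : ℝ) : ℂ))) * phiG (ω / 2)) :
    ∀ ω : ℝ, psiG ω = Complex.I * Complex.exp (Complex.I * (etaL L ω : ℂ)) * psiH ω := by
  have hIexp : Complex.I = Complex.exp (Complex.I * ((Real.pi / 2 : ℝ) : ℂ)) := by
    rw [mul_comm, Complex.exp_mul_I, ← Complex.ofReal_cos, ← Complex.ofReal_sin,
      Real.cos_pi_div_two, Real.sin_pi_div_two]
    simp
  have hI2 : ∀ y : ℝ, Complex.I * Complex.exp (Complex.I * ((y : ℝ) : ℂ))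
      = Complex.exp (Complex.I * ((Real.pi / 2 + y : ℝ) : ℂ)) := by
    intro y
    nth_rewrite 1 [hIexp]
    rw [← Complex.exp_add]
    congr 1
    push_cast
    ring
  have hG0H0 : ∀ θ : ℝ, G0 (Complex.exp (Complex.I * ((θ : ℝ) : ℂ)))
      = Complex.exp (Complex.I * ((alphaL L θ : ℝ) : ℂ)) *
        Complex.exp (Complex.I * ((-(θ / 2) : ℝ) : ℂ)) *
        H0 (Complex.exp (Complex.I * ((θ : ℝ) : ℂ))) := by
    intro θ
    have hz : Complex.exp (Complex.I * ((θ : ℝ) : ℂ)) ≠ 0 := Complex.exp_ne_zero _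
    rw [hG0 _ hz, hH0 _ hz, mul_assoc, CF_ratio L θ]
    ring
  have hphi : ∀ ω' : ℝ, phiG ω'
      = Complex.exp (Complex.I * ((betaL L ω' + -(ω' / 2) : ℝ) : ℂ)) * phiH ω' := by
    intro ω'
    set c : ℕ → ℝ := fun j => alphaL L (ω' / 2 ^ (j + 1)) + -(ω' / 2 ^ (j + 1) / 2) with hc
    have hsum : HasSum c (betaL L ω' + -(ω' / 2)) := by
      have h1 : HasSum (fun j : ℕ => alphaL L (ω' / 2 ^ (j + 1))) (betaL L ω') :=
        (CF_alpha_summable L ω').hasSum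
      exact h1.add (CF_geo_hasSum ω')
    have hb := CF_hasProd_exp hsum
    have ha := (hMulH ω').hasProd
    have hab := ha.mul hb
    have hpt : (fun j : ℕ => (1 / (Real.sqrt 2 : ℂ)) *
          G0 (Complex.exp (Complex.I * ((ω' / 2 ^ (j + 1) : ℝ) : ℂ))))
        = fun j : ℕ => ((1 / (Real.sqrt 2 : ℂ)) *
            H0 (Complex.exp (Complex.I * ((ω' / 2 ^ (j + 1) : ℝ) : ℂ)))) *
          Complex.exp (Complex.I * ((c j : ℝ) : ℂ)) := by
      funext j
      have hval : Complex.exp (Complex.I * ((alphaL L (ω' / 2 ^ (j + 1)) : ℝ) : ℂ)) *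
            Complex.exp (Complex.I * ((-(ω' / 2 ^ (j + 1) / 2) : ℝ) : ℂ))
          = Complex.exp (Complex.I * ((c j : ℝ) : ℂ)) := by
        rw [← Complex.exp_add]
        congr 1
        simp only [hc]
        push_cast
        ring
      rw [hG0H0 (ω' / 2 ^ (j + 1)), ← hval]
      ring
    rw [hphiG ω', hpt, hab.tprod_eq, ← hphiH ω']
    ring
  intro ω
  rw [hpsiG ω, hpsiH ω, hphi (ω / 2)]
  have hzω : Complex.exp (Complex.I * ((ω / 2 : ℝ) : ℂ)) ≠ 0 := Complex.exp_ne_zero _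
  rw [hG1 _ hzω, hH1 _ hzω]
  have hprime : -(Complex.exp (Complex.I * ((ω / 2 : ℝ) : ℂ)))⁻¹
      = Complex.exp (Complex.I * ((-(ω / 2) - Real.pi : ℝ) : ℂ)) := by
    rw [show Complex.I * (((-(ω / 2) - Real.pi : ℝ)) : ℂ)
        = -((Real.pi : ℂ) * Complex.I) + -(Complex.I * ((ω / 2 : ℝ) : ℂ)) by push_cast; ring,
      Complex.exp_add, Complex.exp_neg, Complex.exp_neg, Complex.exp_pi_mul_I]
    norm_num
  rw [hprime, hG0H0 (-(ω / 2) - Real.pi)]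
  have hα : Complex.exp (Complex.I * ((alphaL L (-(ω / 2) - Real.pi) : ℝ) : ℂ))
      = (Complex.exp (Complex.I * ((alphaL L (ω / 2 + Real.pi) : ℝ) : ℂ)))⁻¹ := by
    rw [show -(ω / 2) - Real.pi = -(ω / 2 + Real.pi) by ring]
    exact CF_alpha_neg_exp L (ω / 2 + Real.pi)
  rw [hα]
  have hphase : (Complex.exp (Complex.I * ((alphaL L (ω / 2 + Real.pi) : ℝ) : ℂ)))⁻¹ *
        Complex.exp (Complex.I * ((-((-(ω / 2) - Real.pi) / 2) : ℝ) : ℂ)) *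
        Complex.exp (Complex.I * ((betaL L (ω / 2) + -(ω / 2 / 2) : ℝ) : ℂ))
      = Complex.I * Complex.exp (Complex.I * ((etaL L ω : ℝ) : ℂ)) := by
    rw [← Complex.exp_neg, ← Complex.exp_add, ← Complex.exp_add, hI2 (etaL L ω)]
    congr 1
    rw [etaL]
    push_cast
    ring
  linear_combination (1 / (Real.sqrt 2 : ℂ)) *
    (Complex.exp (Complex.I * ((ω / 2 : ℝ) : ℂ)))⁻¹ *
    H0 (Complex.exp (Complex.I * ((-(ω / 2) - Real.pi : ℝ) : ℂ))) * phiH (ω / 2) * hphase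
end

section
/- Let L and M be positive integers. There exists a unique real polynomial r of degree at most M + L − 1 such that for all y ∈ ℝ, r(1−y) · s_{L,M}(1−y) + r(y) · s_{L,M}(y) = (2L+1)² · 2^{−2L−2M+1}. -/
open Polynomial

/-- The real polynomial `s_{L,M}(y) = y^M ∑_{n=0}^{L} C(2L+1, 2n) y^n`. -/
noncomputable def sPoly (L M : ℕ) : Polynomial ℝ :=
  Polynomial.X ^ M *
    ∑ n ∈ Finset.range (L + 1),
      Polynomial.C ((Nat.choose (2 * L + 1) (2 * n) : ℝ)) * Polynomial.X ^ n

open Finset in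

lemma even_sum (L : ℕ) (w : ℂ) :
    (1 + w) ^ (2 * L + 1) + (1 - w) ^ (2 * L + 1) =
      2 * ∑ n ∈ Finset.range (L + 1), ((2 * L + 1).choose (2 * n) : ℂ) * w ^ (2 * n) := by
  have h1 : (1 + w) ^ (2 * L + 1) = ∑ k ∈ Finset.range (2 * L + 2),
      w ^ k * ((2 * L + 1).choose k : ℂ) := by
    rw [add_comm 1 w, add_pow]
    simp
  have h2 : (1 - w) ^ (2 * L + 1) = ∑ k ∈ Finset.range (2 * L + 2),
      (-w) ^ k * ((2 * L + 1).choose k : ℂ) := by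
    rw [sub_eq_add_neg, add_comm, add_pow]
    simp
  rw [h1, h2, ← Finset.sum_add_distrib]
  have h3 : ∀ k ∈ Finset.range (2 * L + 2),
      w ^ k * ((2 * L + 1).choose k : ℂ) + (-w) ^ k * ((2 * L + 1).choose k : ℂ)
      = if Even k then 2 * (((2 * L + 1).choose k : ℂ) * w ^ k) else 0 := by
    intro k _
    rcases Nat.even_or_odd k with hk | hk
    · rw [if_pos hk, hk.neg_pow]
      ring
    · rw [if_neg (Nat.not_even_iff_odd.mpr hk), hk.neg_pow]
      ring
  rw [Finset.sum_congr rfl h3, ← Finset.sum_filter, Finset.mul_sum]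
  refine Finset.sum_nbij' (i := fun k => k / 2) (j := fun n => 2 * n) ?_ ?_ ?_ ?_ ?_
  · intro k hk
    simp only [Finset.mem_filter, Finset.mem_range] at hk ⊢
    omega
  · intro n hn
    simp only [Finset.mem_filter, Finset.mem_range, Finset.mem_range] at hn ⊢
    exact ⟨by omega, ⟨n, by omega⟩⟩
  · intro k hk
    simp only [Finset.mem_filter, Finset.mem_range] at hk
    obtain ⟨-, c, hc⟩ := hk
    omega
  · intro n hn
    omega
  · intro k hk
    simp only [Finset.mem_filter, Finset.mem_range] at hk
    obtain ⟨-, c, hc⟩ := hk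
    have h2k : 2 * (k / 2) = k := by omega
    rw [h2k]

lemma sum_ne_zero_at_zero (L : ℕ) :
    ∑ n ∈ Finset.range (L + 1), ((2 * L + 1).choose (2 * n) : ℂ) * (0 : ℂ) ^ n ≠ 0 := by
  rw [Finset.sum_eq_single 0]
  · simp
  · intro b _ hb
    simp [zero_pow hb]
  · simp

lemma root_neg (L : ℕ) (z : ℂ)
    (h : ∑ n ∈ Finset.range (L + 1), ((2 * L + 1).choose (2 * n) : ℂ) * z ^ n = 0) :
    z.im = 0 ∧ z.re < 0 := by
  have hz0 : z ≠ 0 := by rintro rfl; exact sum_ne_zero_at_zero L h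
  obtain ⟨w, hw⟩ := IsAlgClosed.exists_pow_nat_eq z (n := 2) (by norm_num)
  have hsum : ∑ n ∈ Finset.range (L + 1), ((2 * L + 1).choose (2 * n) : ℂ) * w ^ (2 * n) = 0 := by
    have : ∀ n, w ^ (2 * n) = z ^ n := fun n => by rw [pow_mul, hw]
    simpa only [this] using h
  have heq : (1 + w) ^ (2 * L + 1) = -(1 - w) ^ (2 * L + 1) := by
    have := even_sum L w
    rw [hsum, mul_zero] at this
    linear_combination this
  have habs : ‖1 + w‖ ^ (2 * L + 1) = ‖1 - w‖ ^ (2 * L + 1) := by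
    have := congrArg (fun x : ℂ => ‖x‖) heq
    rwa [norm_pow, norm_neg, norm_pow] at this
  have habs' : ‖1 + w‖ = ‖1 - w‖ :=
    (pow_left_strictMonoOn₀ (n := 2 * L + 1) (by omega)).injOn (norm_nonneg _) (norm_nonneg _) habs
  have hre : w.re = 0 := by
    have h2 : ‖1 + w‖ ^ 2 = ‖1 - w‖ ^ 2 := by rw [habs']
    rw [Complex.sq_norm, Complex.sq_norm, Complex.normSq_apply, Complex.normSq_apply] at h2
    simp only [Complex.add_re, Complex.add_im, Complex.sub_re, Complex.sub_im,
      Complex.one_re, Complex.one_im] at h2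
    nlinarith
  have him : w.im ≠ 0 := by
    intro h'
    apply hz0
    rw [← hw]
    have : w = 0 := Complex.ext hre h'
    simp [this]
  constructor
  · rw [← hw]
    rw [pow_two, Complex.mul_im, hre]
    ring
  · rw [← hw, pow_two, Complex.mul_re, hre]
    simp only [zero_mul, zero_sub]
    have h1 : 0 < w.im * w.im := mul_self_pos.mpr him
    linarith

lemma qPoly_natDegree (L : ℕ) :
    (∑ n ∈ Finset.range (L + 1),
      Polynomial.C ((Nat.choose (2 * L + 1) (2 * n) : ℝ)) * Polynomial.X ^ n).natDegree = L := by
  apply le_antisymm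
  · apply Polynomial.natDegree_sum_le_of_forall_le
    intro i hi
    simp only [Finset.mem_range] at hi
    exact (Polynomial.natDegree_C_mul_le _ _).trans (by simp; omega)
  · apply Polynomial.le_natDegree_of_ne_zero
    rw [Polynomial.finset_sum_coeff]
    have : ∀ n ∈ Finset.range (L + 1),
        (Polynomial.C ((Nat.choose (2 * L + 1) (2 * n) : ℝ)) * Polynomial.X ^ n).coeff L
        = if n = L then ((2 * L + 1).choose (2 * L) : ℝ) else 0 := by
      intro n hn
      simp only [Finset.mem_range] at hn
      rw [Polynomial.coeff_C_mul, Polynomial.coeff_X_pow]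
      by_cases h : n = L
      · subst h; simp
      · rw [if_neg (fun hh : L = n => h hh.symm), mul_zero, if_neg h]
    rw [Finset.sum_congr rfl this, Finset.sum_ite_eq' (Finset.range (L + 1)) L]
    simp only [Finset.mem_range, lt_add_iff_pos_right, zero_lt_one, if_true]
    have : (2 * L + 1).choose (2 * L) = 2 * L + 1 := by
      have h := Nat.choose_symm (n := 2 * L + 1) (k := 1) (by omega)
      simp only [Nat.add_sub_cancel] at h
      simpa using h
    rw [this]
    positivity

lemma qPoly_ne_zero (L : ℕ) :
    (∑ n ∈ Finset.range (L + 1),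
      Polynomial.C ((Nat.choose (2 * L + 1) (2 * n) : ℝ)) * Polynomial.X ^ n) ≠ 0 := by
  intro h
  have h1 := congrArg (Polynomial.eval 0) h
  simp only [Polynomial.eval_finset_sum, Polynomial.eval_mul, Polynomial.eval_C,
    Polynomial.eval_pow, Polynomial.eval_X, Polynomial.eval_zero] at h1
  rw [Finset.sum_eq_single 0] at h1
  · simp at h1
  · intro b _ hb
    simp [zero_pow hb]
  · simp

lemma sPoly_natDegree (L M : ℕ) : (sPoly L M).natDegree = M + L := by
  rw [sPoly, Polynomial.natDegree_mul (pow_ne_zero _ Polynomial.X_ne_zero) (qPoly_ne_zero L),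
    Polynomial.natDegree_X_pow, qPoly_natDegree]

lemma sPoly_ne_zero (L M : ℕ) : sPoly L M ≠ 0 :=
  mul_ne_zero (pow_ne_zero _ Polynomial.X_ne_zero) (qPoly_ne_zero L)

lemma aeval_sPoly (L M : ℕ) (z : ℂ) :
    Polynomial.aeval z (sPoly L M) =
      z ^ M * ∑ n ∈ Finset.range (L + 1), ((2 * L + 1).choose (2 * n) : ℂ) * z ^ n := by
  simp [sPoly, Polynomial.aeval_C, map_sum]

lemma sPoly_coprime (L M : ℕ) :
    IsCoprime (sPoly L M) ((sPoly L M).comp (1 - Polynomial.X)) := by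
  refine (Polynomial.isCoprime_iff_aeval_ne_zero_of_isAlgClosed (k := ℝ) ℂ _ _).mpr ?_
  intro z
  by_contra hcon
  push_neg at hcon
  obtain ⟨h1, h2⟩ := hcon
  rw [Polynomial.aeval_comp] at h2
  have hz : Polynomial.aeval z (1 - Polynomial.X : Polynomial ℝ) = 1 - z := by simp
  rw [hz] at h2
  rw [aeval_sPoly] at h1 h2
  rcases mul_eq_zero.mp h1 with h1' | h1' <;> rcases mul_eq_zero.mp h2 with h2' | h2'
  · rw [pow_eq_zero_iff'] at h1' h2'
    rw [h1'.1] at h2'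
    simp at h2'
  · rw [pow_eq_zero_iff'] at h1'
    rw [h1'.1] at h2'
    have := (root_neg L _ h2').2
    rw [Complex.sub_re, Complex.zero_re, Complex.one_re] at this
    linarith
  · rw [pow_eq_zero_iff'] at h2'
    have hz1 : z = 1 := by linear_combination -h2'.1
    rw [hz1] at h1'
    have := (root_neg L _ h1').2
    rw [Complex.one_re] at this
    linarith
  · have ha := root_neg L _ h1'
    have hb := root_neg L _ h2'
    rw [Complex.sub_re, Complex.one_re] at hb
    linarith [ha.2, hb.2]

lemma pair_unique {s t a1 b1 a2 b2 : Polynomial ℝ} (hco : IsCoprime s t) (hs : s ≠ 0)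
    (hb1 : b1.natDegree < s.natDegree) (hb2 : b2.natDegree < s.natDegree)
    (h : a1 * s + b1 * t = a2 * s + b2 * t) : a1 = a2 ∧ b1 = b2 := by
  have hdvd : s ∣ (b2 - b1) * t := ⟨a1 - a2, by linear_combination -h⟩
  have hsd : s ∣ b2 - b1 := hco.dvd_of_dvd_mul_right hdvd
  have hb : b2 - b1 = 0 := by
    by_contra hne
    have h1 := Polynomial.natDegree_le_of_dvd hsd hne
    have h2 : (b2 - b1).natDegree ≤ max b2.natDegree b1.natDegree :=
      Polynomial.natDegree_sub_le _ _
    omega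
  have hbb : b1 = b2 := by linear_combination -hb
  refine ⟨?_, hbb⟩
  apply mul_right_cancel₀ hs
  rw [hbb] at h
  linear_combination h

lemma one_sub_X_natDegree : (1 - Polynomial.X : Polynomial ℝ).natDegree = 1 := by
  have h : (1 - Polynomial.X : Polynomial ℝ) = -(Polynomial.X - Polynomial.C 1) := by
    simp [neg_sub]
  rw [h, Polynomial.natDegree_neg, Polynomial.natDegree_X_sub_C]

lemma comp_comp_self (p : Polynomial ℝ) :
    (p.comp (1 - Polynomial.X)).comp (1 - Polynomial.X) = p := by
  rw [Polynomial.comp_assoc]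
  have : (1 - Polynomial.X : Polynomial ℝ).comp (1 - Polynomial.X) = Polynomial.X := by
    simp [Polynomial.sub_comp]
  rw [this, Polynomial.comp_X]

lemma comp_natDegree (p : Polynomial ℝ) :
    (p.comp (1 - Polynomial.X)).natDegree = p.natDegree := by
  rw [Polynomial.natDegree_comp, one_sub_X_natDegree, mul_one]


/-- existence and uniqueness of the Bezout solution `r_{L,M}`. -/
theorem bezout_unique_solution (L M : ℕ) (hL : 0 < L) (hM : 0 < M) :
    ∃! r : Polynomial ℝ, r.natDegree ≤ M + L - 1 ∧
      ∀ y : ℝ,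
        r.eval (1 - y) * (sPoly L M).eval (1 - y) + r.eval y * (sPoly L M).eval y =
          (2 * (L : ℝ) + 1) ^ 2 * (2 : ℝ) ^ (-(2 * (L : ℤ)) - 2 * (M : ℤ) + 1) := by
  set kk : ℝ := (2 * (L : ℝ) + 1) ^ 2 * (2 : ℝ) ^ (-(2 * (L : ℤ)) - 2 * (M : ℤ) + 1) with hkk
  set s : Polynomial ℝ := sPoly L M with hsdef
  set t : Polynomial ℝ := s.comp (1 - Polynomial.X) with htdef
  have hs0 : s ≠ 0 := sPoly_ne_zero L M
  have hsdeg : s.natDegree = M + L := sPoly_natDegree L M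
  have htdeg : t.natDegree = M + L := by rw [htdef, comp_natDegree, hsdeg]
  have hco : IsCoprime s t := sPoly_coprime L M
  obtain ⟨u, v, huv⟩ := id hco
  set q : Polynomial ℝ := (Polynomial.C kk * v) / s with hqdef
  set b : Polynomial ℝ := (Polynomial.C kk * v) % s with hbdef
  have hqr : s * q + b = Polynomial.C kk * v := EuclideanDomain.div_add_mod _ _
  have hbdeg : b.natDegree < M + L := by
    rw [← hsdeg]
    exact Polynomial.natDegree_mod_lt _ (by rw [hsdeg]; omega)
  set a : Polynomial ℝ := Polynomial.C kk * u + q * t with hadef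
  have key : a * s + b * t = Polynomial.C kk := by
    rw [hadef]
    linear_combination Polynomial.C kk * huv + t * hqr
  have hadeg : a.natDegree < M + L := by
    rcases eq_or_ne a 0 with ha0 | ha0
    · rw [ha0, Polynomial.natDegree_zero]; omega
    · have has : a * s = Polynomial.C kk - b * t := by linear_combination key
      have h1 : (a * s).natDegree = a.natDegree + (M + L) := by
        rw [Polynomial.natDegree_mul ha0 hs0, hsdeg]
      have h2 : (Polynomial.C kk - b * t).natDegree ≤
          max (Polynomial.C kk).natDegree (b * t).natDegree :=
        Polynomial.natDegree_sub_le _ _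
      have h3 : (b * t).natDegree ≤ b.natDegree + t.natDegree := Polynomial.natDegree_mul_le
      have h4 : (Polynomial.C kk).natDegree = 0 := Polynomial.natDegree_C _
      rw [has] at h1
      omega
  -- symmetry
  have key2 : (b.comp (1 - Polynomial.X)) * s + (a.comp (1 - Polynomial.X)) * t =
      Polynomial.C kk := by
    have := congrArg (fun p => p.comp (1 - Polynomial.X)) key
    simp only [Polynomial.add_comp, Polynomial.mul_comp, Polynomial.C_comp] at this
    rw [← htdef, comp_comp_self] at this
    linear_combination this
  have hsym := pair_unique hco hs0 (by rw [hsdeg]; omega)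
    (by rw [comp_natDegree, hsdeg]; omega) (key.trans key2.symm)
  -- hsym : a = b.comp (1 - X) ∧ b = a.comp (1 - X)
  have hbsig : b = a.comp (1 - Polynomial.X) := hsym.2
  have heval : ∀ r' : Polynomial ℝ, ∀ y : ℝ,
      Polynomial.eval y (r' * s + (r'.comp (1 - Polynomial.X)) * t) =
        r'.eval y * s.eval y + r'.eval (1 - y) * s.eval (1 - y) := by
    intro r' y
    simp only [Polynomial.eval_add, Polynomial.eval_mul, Polynomial.eval_comp,
      Polynomial.eval_sub, Polynomial.eval_one, Polynomial.eval_X, htdef]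
  refine ⟨a, ⟨by omega, ?_⟩, ?_⟩
  · intro y
    have := congrArg (Polynomial.eval y) key
    rw [hbsig] at this
    rw [heval a y] at this
    rw [Polynomial.eval_C] at this
    linarith
  · rintro r' ⟨hdeg', heval'⟩
    have key' : r' * s + (r'.comp (1 - Polynomial.X)) * t = Polynomial.C kk := by
      apply Polynomial.funext
      intro y
      rw [heval r' y, Polynomial.eval_C]
      linarith [heval' y]
    have := pair_unique hco hs0
      (by rw [comp_natDegree, hsdeg]; omega)
      (by rw [hsdeg, hbdef]; exact hbdeg)
      (key'.trans key.symm)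
    exact this.1
end

section
/- Let L and M be positive integers, let r_{L,M} be the unique real polynomial of degree at most M + L − 1 satisfying r(1−y) s_{L,M}(1−y) + r(y) s_{L,M}(y) = (2L+1)² 2^{−2L−2M+1} for all y, and define S(z) = (2 + z + 1/z)^M · D_L(z) · D_L(1/z) for z ∈ ℂ \ {0}. Then for any real polynomial p, the function R(z) = p((2 + z + 1/z)/4) satisfies R(z) S(z) + R(−z) S(−z) = 2 for all z ∈ ℂ \ {0} if and only if there exists a real polynomial q with q(1−y) = −q(y) for all y ∈ ℝ such that p(y) = r_{L,M}(y) + s_{L,M}(1−y) · q(y) for all y ∈ ℝ. -/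
open Polynomial

lemma sum_pairs (N : ℕ) (g : ℕ → ℂ) :
    ∑ k ∈ Finset.range (2*N), g k = ∑ n ∈ Finset.range N, (g (2*n) + g (2*n+1)) := by
  induction N with
  | zero => simp
  | succ n ih =>
    have h : 2*(n+1) = (2*n+1)+1 := by ring
    rw [h, Finset.sum_range_succ, Finset.sum_range_succ, ih, Finset.sum_range_succ]
    ring

lemma lemD (L : ℕ) (u v : ℂ) :
    (u+v)^(2*L+1) - (u-v)^(2*L+1) =
      2 * ∑ n ∈ Finset.range (L+1),
        (Nat.choose (2*L+1) (2*n) : ℂ) * u^(2*n) * v^(2*(L-n)+1) := by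
  rw [show u - v = u + -v from sub_eq_add_neg u v, add_pow, add_pow, ← Finset.sum_sub_distrib]
  have h : 2*L+1+1 = 2*(L+1) := by ring
  rw [h, sum_pairs, Finset.mul_sum]
  apply Finset.sum_congr rfl
  intro n hn
  have hn' : n ≤ L := Nat.lt_succ_iff.mp (Finset.mem_range.mp hn)
  have e1 : 2*L+1 - 2*n = 2*(L-n)+1 := by omega
  have e2 : 2*L+1 - (2*n+1) = 2*(L-n) := by omega
  rw [e1, e2, Odd.neg_pow ⟨L-n, by ring⟩, Even.neg_pow (even_two_mul _)]
  ring

lemma keyA (L : ℕ) (z : ℂ) (hz : z ≠ 0) :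
    (∑ n ∈ Finset.range (L+1), (Nat.choose (2*L+1) (2*n) : ℂ) * z^n) *
      (∑ n ∈ Finset.range (L+1), (Nat.choose (2*L+1) (2*n) : ℂ) * (z⁻¹)^n)
    = 4^L * ∑ n ∈ Finset.range (L+1),
        (Nat.choose (2*L+1) (2*n) : ℂ) * ((2 + z + z⁻¹)/4)^n := by
  obtain ⟨x, rfl⟩ := IsAlgClosed.exists_pow_nat_eq z (n := 2) (by norm_num)
  have hx : x ≠ 0 := fun h => hz (by simp [h])
  set C : ℕ → ℂ := fun n => (Nat.choose (2*L+1) (2*n) : ℂ) with hC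
  set w : ℂ := (2 + x^2 + (x^2)⁻¹)/4 with hw
  set S1 : ℂ := ∑ n ∈ Finset.range (L+1), C n * (x^2)^n with hS1
  set S2p : ℂ := ∑ n ∈ Finset.range (L+1), C n * x^(2*(L-n)) with hS2p
  set S3p : ℂ := ∑ n ∈ Finset.range (L+1), C n * (1+x^2)^(2*n) * (2*x)^(2*(L-n)) with hS3p
  have hS2 : x^(2*L) * (∑ n ∈ Finset.range (L+1), C n * ((x^2)⁻¹)^n) = S2p := by
    rw [Finset.mul_sum, hS2p]
    apply Finset.sum_congr rfl
    intro n hn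
    have hn' : n ≤ L := Nat.lt_succ_iff.mp (Finset.mem_range.mp hn)
    rw [inv_pow, ← pow_mul]
    have h1 : 2*L = 2*(L-n) + 2*n := by omega
    rw [h1, pow_add]
    field_simp
  have h4w : (4*x^2) * w = (1+x^2)^2 := by
    rw [hw]; field_simp; ring
  have hS3 : (4*x^2)^L * (∑ n ∈ Finset.range (L+1), C n * w^n) = S3p := by
    rw [Finset.mul_sum, hS3p]
    apply Finset.sum_congr rfl
    intro n hn
    have hn' : n ≤ L := Nat.lt_succ_iff.mp (Finset.mem_range.mp hn)
    have h1 : L = (L-n) + n := by omega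
    calc (4*x^2)^L * (C n * w^n)
        = C n * ((4*x^2)^(L-n) * ((4*x^2)*w)^n) := by
          rw [mul_pow (4*x^2) w n]
          nth_rewrite 1 [h1]
          rw [pow_add]; ring
      _ = C n * (1+x^2)^(2*n) * (2*x)^(2*(L-n)) := by
          rw [h4w, ← pow_mul, mul_comm 2 n, pow_mul, pow_mul]
          ring
  have key2 : S1 * S2p = S3p := by
    have h4x : (4*x : ℂ) ≠ 0 := by simp [hx]
    apply mul_left_cancel₀ h4x
    have E1 : 2*S1 = (x+1)^(2*L+1) - (x-1)^(2*L+1) := by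
      rw [lemD L x 1, hS1, Finset.mul_sum, Finset.mul_sum]
      apply Finset.sum_congr rfl
      intro n hn
      rw [one_pow, ← pow_mul]
      ring
    have E2 : 2*x*S2p = (1+x)^(2*L+1) - (1-x)^(2*L+1) := by
      rw [lemD L 1 x, hS2p, Finset.mul_sum, Finset.mul_sum]
      apply Finset.sum_congr rfl
      intro n hn
      rw [one_pow, pow_succ]
      ring
    have E3 : 2*(2*x)*S3p = ((1+x^2)+2*x)^(2*L+1) - ((1+x^2)-2*x)^(2*L+1) := by
      rw [lemD L (1+x^2) (2*x), hS3p, Finset.mul_sum, Finset.mul_sum]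
      apply Finset.sum_congr rfl
      intro n hn
      rw [pow_succ]
      ring
    have hsq1 : (1+x^2)+2*x = (1+x)^2 := by ring
    have hsq2 : (1+x^2)-2*x = (1-x)^2 := by ring
    have hodd : (x-1)^(2*L+1) = -((1-x)^(2*L+1)) := by
      rw [show x - 1 = -(1-x) from by ring, Odd.neg_pow ⟨L, by ring⟩]
    have expand : ((x+1)^(2*L+1) - (x-1)^(2*L+1)) * ((1+x)^(2*L+1) - (1-x)^(2*L+1))
        = ((1+x)^2)^(2*L+1) - ((1-x)^2)^(2*L+1) := by
      rw [hodd, show x+1 = 1+x from by ring, pow_right_comm (1+x) 2 (2*L+1),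
        pow_right_comm (1-x) 2 (2*L+1)]
      ring
    calc 4*x * (S1 * S2p) = (2*S1) * (2*x*S2p) := by ring
      _ = ((1+x)^2)^(2*L+1) - ((1-x)^2)^(2*L+1) := by rw [E1, E2, expand]
      _ = ((1+x^2)+2*x)^(2*L+1) - ((1+x^2)-2*x)^(2*L+1) := by rw [hsq1, hsq2]
      _ = 2*(2*x)*S3p := E3.symm
      _ = 4*x*S3p := by ring
  have hxpow : (x:ℂ)^(2*L) ≠ 0 := pow_ne_zero _ hx
  apply mul_left_cancel₀ hxpow
  calc x^(2*L) * (S1 * (∑ n ∈ Finset.range (L+1), C n * ((x^2)⁻¹)^n))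
      = S1 * (x^(2*L) * (∑ n ∈ Finset.range (L+1), C n * ((x^2)⁻¹)^n)) := by ring
    _ = S3p := by rw [hS2, key2]
    _ = (4*x^2)^L * (∑ n ∈ Finset.range (L+1), C n * w^n) := hS3.symm
    _ = x^(2*L) * (4^L * ∑ n ∈ Finset.range (L+1), C n * w^n) := by
        rw [mul_pow, ← pow_mul]; ring

lemma hcL (L : ℕ) : (2 * (L:ℂ) + 1) ≠ 0 := by
  intro h
  have h2 : ((2*L+1:ℕ):ℂ) = 0 := by push_cast; exact h
  exact (Nat.cast_ne_zero.mpr (by omega : 2*L+1 ≠ 0)) h2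

lemma S_eval (L M : ℕ) (z : ℂ) (hz : z ≠ 0) :
    (2 + z + 1/z)^M * DL L z * DL L (1/z)
      = (4^(M+L) / (2*(L:ℂ)+1)^2) *
          (Polynomial.aeval ((2 + z + 1/z)/4)) (sPoly L M) := by
  have hzL : (z:ℂ)^L ≠ 0 := pow_ne_zero _ hz
  have hD1 : DL L z = (1/(2*(L:ℂ)+1)) * ((z^L)⁻¹ *
      ∑ n ∈ Finset.range (L+1), (Nat.choose (2*L+1) (2*n) : ℂ) * z^n) := by
    rw [DL]
    congr 1
    rw [Finset.mul_sum]
    apply Finset.sum_congr rfl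
    intro n hn
    rw [zpow_sub₀ hz, zpow_natCast, zpow_natCast]
    ring
  have hD2 : DL L (1/z) = (1/(2*(L:ℂ)+1)) * (z^L *
      ∑ n ∈ Finset.range (L+1), (Nat.choose (2*L+1) (2*n) : ℂ) * (z⁻¹)^n) := by
    rw [DL]
    congr 1
    rw [Finset.mul_sum]
    apply Finset.sum_congr rfl
    intro n hn
    rw [one_div, zpow_sub₀ (inv_ne_zero hz), zpow_natCast, zpow_natCast, inv_pow, inv_pow]
    rw [div_eq_mul_inv, inv_inv]
    ring
  have haev : (Polynomial.aeval ((2 + z + 1/z)/4)) (sPoly L M)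
      = ((2 + z + 1/z)/4)^M *
        ∑ n ∈ Finset.range (L+1), (Nat.choose (2*L+1) (2*n) : ℂ) * ((2 + z + 1/z)/4)^n := by
    rw [sPoly, map_mul, map_pow, aeval_X, map_sum]
    congr 1
    apply Finset.sum_congr rfl
    intro n hn
    rw [map_mul, map_pow, aeval_X, aeval_C]
    norm_num
  rw [hD1, hD2, haev]
  have h1z : (1:ℂ)/z = z⁻¹ := one_div z
  rw [h1z]
  set A1 := ∑ n ∈ Finset.range (L+1), (Nat.choose (2*L+1) (2*n) : ℂ) * z^n with hA1
  set A2 := ∑ n ∈ Finset.range (L+1), (Nat.choose (2*L+1) (2*n) : ℂ) * (z⁻¹)^n with hA2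
  set Sw := ∑ n ∈ Finset.range (L+1), (Nat.choose (2*L+1) (2*n) : ℂ) * ((2 + z + z⁻¹)/4)^n
    with hSw
  have hkey : A1 * A2 = 4^L * Sw := keyA L z hz
  have hc : (2*(L:ℂ)+1) ≠ 0 := hcL L
  calc (2 + z + z⁻¹)^M * ((1/(2*(L:ℂ)+1)) * ((z^L)⁻¹ * A1)) * ((1/(2*(L:ℂ)+1)) * (z^L * A2))
      = (1/(2*(L:ℂ)+1))^2 * (2 + z + z⁻¹)^M * ((z^L)⁻¹ * z^L) * (A1 * A2) := by ring
    _ = (1/(2*(L:ℂ)+1))^2 * (2 + z + z⁻¹)^M * (4^L * Sw) := by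
        rw [inv_mul_cancel₀ hzL, hkey]; ring
    _ = (4^(M+L) / (2*(L:ℂ)+1)^2) * (((2 + z + z⁻¹)/4)^M * Sw) := by
        rw [pow_add, div_pow]
        generalize (2 + z + z⁻¹) = a
        field_simp
        have h4a : (4:ℂ) * (a / 4) = a := by ring
        rw [mul_assoc Sw, ← mul_pow, h4a, mul_comm]

lemma exists_z (w : ℂ) : ∃ z : ℂ, z ≠ 0 ∧ (2 + z + 1/z)/4 = w := by
  obtain ⟨d, hd⟩ := IsAlgClosed.exists_pow_nat_eq ((4*w-2)^2 - 4) (n := 2) (by norm_num)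
  set z := ((4*w-2)+d)/2 with hzdef
  have hq : z^2 - (4*w-2)*z + 1 = 0 := by
    rw [hzdef]; linear_combination (1/4) * hd
  have hz0 : z ≠ 0 := by
    intro h; rw [h] at hq; norm_num at hq
  refine ⟨z, hz0, ?_⟩
  field_simp
  linear_combination hq

lemma sPoly_eval_one (L M : ℕ) : (0:ℝ) < (sPoly L M).eval 1 := by
  rw [sPoly]
  simp only [eval_mul, eval_pow, eval_X, one_pow, one_mul, eval_finset_sum, eval_mul, eval_C,
    eval_pow, eval_X, one_pow, mul_one]
  apply Finset.sum_pos
  · intro i hi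
    have : 2*i ≤ 2*L+1 := by
      have := Finset.mem_range.mp hi; omega
    exact_mod_cast Nat.choose_pos this
  · exact ⟨0, Finset.mem_range.mpr (Nat.succ_pos L)⟩

/-- characterization of all polynomial solutions of the perfect
reconstruction equation `R(z) S(z) + R(-z) S(-z) = 2` of the form
`R(z) = p((2 + z + 1/z)/4)`. -/
theorem PR_solutions_characterization (L M : ℕ) (hL : 0 < L) (hM : 0 < M)
    (r : Polynomial ℝ)
    (hrdeg : r.natDegree ≤ M + L - 1)
    (hr : ∀ y : ℝ,
      r.eval (1 - y) * (sPoly L M).eval (1 - y) + r.eval y * (sPoly L M).eval y =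
        (2 * (L : ℝ) + 1) ^ 2 * (2 : ℝ) ^ (-(2 * (L : ℤ)) - 2 * (M : ℤ) + 1))
    (p : Polynomial ℝ) :
    (∀ z : ℂ, z ≠ 0 →
      (Polynomial.aeval ((2 + z + 1 / z) / 4) p) *
          ((2 + z + 1 / z) ^ M * DL L z * DL L (1 / z)) +
        (Polynomial.aeval ((2 + -z + 1 / (-z)) / 4) p) *
          ((2 + -z + 1 / (-z)) ^ M * DL L (-z) * DL L (1 / (-z))) = 2) ↔
    (∃ q : Polynomial ℝ, (∀ y : ℝ, q.eval (1 - y) = -q.eval y) ∧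
      ∀ y : ℝ, p.eval y = r.eval y + (sPoly L M).eval (1 - y) * q.eval y) := by
  set s : Polynomial ℝ := sPoly L M with hs
  set σ : Polynomial ℝ := 1 - Polynomial.X with hσ
  have hσeval : ∀ y : ℝ, σ.eval y = 1 - y := fun y => by rw [hσ]; simp
  have hσσ : σ.comp σ = Polynomial.X := by rw [hσ]; simp [sub_comp]
  have hcomp2 : ∀ g : Polynomial ℝ, (g.comp σ).comp σ = g := fun g => by
    rw [Polynomial.comp_assoc, hσσ, Polynomial.comp_X]
  set c₀ : ℝ := (2 * (L : ℝ) + 1) ^ 2 * (2 : ℝ) ^ (-(2 * (L : ℤ)) - 2 * (M : ℤ) + 1) with hc₀def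
  have hc₀ : c₀ ≠ 0 := by
    rw [hc₀def]; positivity
  have hrp : r * s + r.comp σ * s.comp σ = Polynomial.C c₀ := by
    apply Polynomial.funext
    intro y
    simp only [eval_add, eval_mul, eval_comp, hσeval, eval_C]
    rw [add_comm]
    exact hr y
  have hs1 : (0:ℝ) < s.eval 1 := sPoly_eval_one L M
  have hs0 : s ≠ 0 := by
    intro h; rw [h] at hs1; simp at hs1
  have hsc0 : s.comp σ ≠ 0 := by
    intro h
    have h2 : (s.comp σ).eval 0 = 0 := by rw [h]; simp
    rw [eval_comp, hσeval] at h2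
    norm_num at h2
    rw [h2] at hs1; simp at hs1
  set c₁ : ℂ := (4:ℂ)^(M+L) / (2*(L:ℂ)+1)^2 with hc₁def
  have hc₁ : c₁ ≠ 0 := by
    rw [hc₁def]
    exact div_ne_zero (pow_ne_zero _ (by norm_num)) (pow_ne_zero _ (hcL L))
  have hc₁c₀ : c₁ * ((c₀ : ℝ) : ℂ) = 2 := by
    rw [hc₁def, hc₀def]
    push_cast
    have h4 : (4:ℂ)^(M+L) = (2:ℂ)^(((2*(M+L):ℕ)):ℤ) := by
      rw [zpow_natCast, pow_mul]; norm_num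
    have he : ((2*(M+L):ℕ):ℤ) + (-(2 * (L:ℤ)) - 2 * (M:ℤ) + 1) = 1 := by push_cast; ring
    have key2 : (2:ℂ)^(((2*(M+L):ℕ)):ℤ) * (2:ℂ)^(-(2 * (L:ℤ)) - 2 * (M:ℤ) + 1) = 2 := by
      rw [← zpow_add₀ (two_ne_zero (α := ℂ)), he, zpow_one]
    rw [h4, div_mul_eq_mul_div, div_eq_iff (pow_ne_zero 2 (hcL L))]
    linear_combination ((2*(L:ℂ)+1)^2) * key2
  have haeval : ∀ (g : Polynomial ℝ) (w : ℂ),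
      Polynomial.aeval w (g.comp σ) = Polynomial.aeval (1 - w) g := by
    intro g w
    rw [Polynomial.aeval_comp]
    congr 1
    rw [hσ]; simp
  have hbridge : (∀ z : ℂ, z ≠ 0 →
      (Polynomial.aeval ((2 + z + 1 / z) / 4) p) *
          ((2 + z + 1 / z) ^ M * DL L z * DL L (1 / z)) +
        (Polynomial.aeval ((2 + -z + 1 / (-z)) / 4) p) *
          ((2 + -z + 1 / (-z)) ^ M * DL L (-z) * DL L (1 / (-z))) = 2) ↔
      p * s + p.comp σ * s.comp σ = Polynomial.C c₀ := by
    constructor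
    · intro H
      have hmap : (p * s + p.comp σ * s.comp σ).map (algebraMap ℝ ℂ)
          = (Polynomial.C c₀).map (algebraMap ℝ ℂ) := by
        apply Polynomial.funext
        intro w
        obtain ⟨z, hz0, hzw⟩ := exists_z w
        have hz' : (-z) ≠ 0 := neg_ne_zero.mpr hz0
        have hw' : (2 + -z + 1 / (-z)) / 4 = 1 - w := by
          rw [← hzw]; field_simp; ring
        have hH := H z hz0
        rw [S_eval L M z hz0, S_eval L M (-z) hz', hzw, hw'] at hH
        have h2 : c₁ * (Polynomial.aeval w p * Polynomial.aeval w s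
            + Polynomial.aeval (1-w) p * Polynomial.aeval (1-w) s) = c₁ * ((c₀:ℝ):ℂ) := by
          rw [hc₁c₀, ← hH, hs, ← hc₁def]; ring
        have h3 := mul_left_cancel₀ hc₁ h2
        rw [Polynomial.eval_map, Polynomial.eval_map, ← Polynomial.aeval_def,
          ← Polynomial.aeval_def]
        simp only [map_add, map_mul, haeval, Polynomial.aeval_C]
        simpa using h3
      exact Polynomial.map_injective _ (algebraMap ℝ ℂ).injective hmap
    · intro hpoly z hz0
      have hz' : (-z) ≠ 0 := neg_ne_zero.mpr hz0
      set w : ℂ := (2 + z + 1/z)/4 with hwdef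
      have hw' : (2 + -z + 1 / (-z)) / 4 = 1 - w := by
        rw [hwdef]; field_simp; ring
      rw [S_eval L M z hz0, S_eval L M (-z) hz', hw']
      have hev := congrArg (Polynomial.aeval w) hpoly
      simp only [map_add, map_mul, haeval, Polynomial.aeval_C] at hev
      rw [← hwdef, ← hc₁def]
      rw [hs] at hev
      have hcoe : (algebraMap ℝ ℂ) c₀ = ((c₀:ℝ):ℂ) := rfl
      rw [hcoe] at hev
      linear_combination c₁ * hev + hc₁c₀
  rw [hbridge]
  constructor
  · intro hpoly
    have hd0 : (p - r) * s + ((p - r).comp σ) * s.comp σ = 0 := by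
      rw [sub_comp]; linear_combination hpoly - hrp
    have cop : IsCoprime (s.comp σ) s := by
      refine ⟨Polynomial.C c₀⁻¹ * r.comp σ, Polynomial.C c₀⁻¹ * r, ?_⟩
      have hCC : Polynomial.C c₀⁻¹ * (Polynomial.C c₀) = 1 := by
        rw [← Polynomial.C_mul, inv_mul_cancel₀ hc₀, Polynomial.C_1]
      linear_combination Polynomial.C c₀⁻¹ * hrp + hCC
    have hdvd : s.comp σ ∣ (p - r) := by
      exact cop.dvd_of_dvd_mul_right ⟨-((p-r).comp σ), by linear_combination hd0⟩
    obtain ⟨q, hq⟩ := hdvd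
    rw [hq, mul_comp, hcomp2] at hd0
    have h1 : s * (s.comp σ) * (q + q.comp σ) = 0 := by
      linear_combination hd0
    have hanti : q + q.comp σ = 0 :=
      (mul_eq_zero.mp h1).resolve_left (mul_ne_zero hs0 hsc0)
    have hanti' : q.comp σ = -q := by linear_combination hanti
    refine ⟨q, ?_, ?_⟩
    · intro y
      have hy := congrArg (Polynomial.eval y) hanti'
      rw [eval_comp, hσeval, eval_neg] at hy
      exact hy
    · intro y
      have hpr : p = r + s.comp σ * q := by linear_combination hq
      have hy := congrArg (Polynomial.eval y) hpr
      rw [eval_add, eval_mul, eval_comp, hσeval] at hy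
      exact hy
  · rintro ⟨q, hq1, hq2⟩
    have hq1p : q.comp σ = -q := by
      apply Polynomial.funext; intro y
      rw [eval_comp, hσeval, eval_neg]; exact hq1 y
    have hq2p : p = r + s.comp σ * q := by
      apply Polynomial.funext; intro y
      rw [eval_add, eval_mul, eval_comp, hσeval]; exact hq2 y
    rw [hq2p, add_comp, mul_comp, hcomp2]
    linear_combination hrp + (s * (s.comp σ)) * hq1p
end

section
/- Let L be a positive integer. The complex roots of the polynomial s̃(y) = ∑_{n=0}^{L} C(2L+1, 2n) y^n are exactly the L distinct negative real numbers y_{k,L} = −tan²( π(2k+1) / (2(2L+1)) ) for k = 0, 1, …, L−1; that is, for x ∈ ℂ, s̃(x) = 0 if and only if x = y_{k,L} for some k ∈ {0, …, L−1}. -/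
open Finset in
private lemma keyid18 (N : ℕ) (w : ℂ) :
    (1+w)^(2*N+1) + (1-w)^(2*N+1)
      = 2 * ∑ n ∈ Finset.range (N+1), (Nat.choose (2*N+1) (2*n) : ℂ) * w^(2*n) := by
  have h1 : (1+w)^(2*N+1) = ∑ k ∈ range (2*N+2), w^k * (2*N+1).choose k := by
    rw [add_comm]; simpa using add_pow w 1 (2*N+1)
  have h2 : (1-w)^(2*N+1) = ∑ k ∈ range (2*N+2), (-w)^k * (2*N+1).choose k := by
    rw [sub_eq_add_neg, add_comm]; simpa using add_pow (-w) 1 (2*N+1)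
  rw [h1, h2, ← Finset.sum_add_distrib]
  have hcong : ∀ k ∈ range (2*N+2), w^k * (2*N+1).choose k + (-w)^k * (2*N+1).choose k
      = if Even k then 2 * (w^k * (2*N+1).choose k) else 0 := by
    intro k _
    rcases Nat.even_or_odd k with h | h
    · rw [h.neg_pow, if_pos h]; ring
    · rw [h.neg_pow, if_neg (Nat.not_even_iff_odd.mpr h)]; ring
  rw [Finset.sum_congr rfl hcong, Finset.sum_ite, Finset.sum_const_zero, add_zero,
    Finset.mul_sum]
  refine Finset.sum_nbij' (fun k => k / 2) (fun n => 2 * n) ?hi ?hj ?li ?ri ?h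
  case hi => intro k hk; simp only [mem_filter, mem_range] at hk; simp only [mem_range]; omega
  case hj =>
    intro n hn; simp only [mem_range] at hn
    simp only [mem_filter, mem_range]; exact ⟨by omega, ⟨n, by omega⟩⟩
  case li =>
    intro k hk; simp only [mem_filter, mem_range] at hk
    obtain ⟨_, m, hm⟩ := hk; show 2 * (k / 2) = k; omega
  case ri => intro n _; show 2 * n / 2 = n; omega
  case h =>
    intro k hk; simp only [mem_filter, mem_range] at hk
    obtain ⟨hlt, m, hm⟩ := hk
    show _ = _ * ((Nat.choose (2*N+1) (2 * (k/2)) : ℂ) * w ^ (2 * (k/2)))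
    have h2 : 2 * (k/2) = k := by omega
    rw [h2]; ring

private lemma evaleq18 (L : ℕ) (θ : ℝ) (hc : Real.cos θ ≠ 0) :
    (∑ n ∈ Finset.range (L+1), (Nat.choose (2*L+1) (2*n) : ℂ)
        * (((-(Real.tan θ ^ 2)) : ℝ) : ℂ) ^ n)
      = (Real.cos ((2*(L:ℝ)+1)*θ) : ℂ) / (Real.cos θ : ℂ) ^ (2*L+1) := by
  set w : ℂ := Complex.I * (Real.tan θ : ℂ) with hw
  have hw2 : (((-(Real.tan θ ^ 2)) : ℝ) : ℂ) = w ^ 2 := by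
    rw [Complex.ofReal_neg, Complex.ofReal_pow, hw, mul_pow, Complex.I_sq]; ring
  have hcC : (Real.cos θ : ℂ) ≠ 0 := Complex.ofReal_ne_zero.mpr hc
  have ht : (Real.tan θ : ℂ) * (Real.cos θ : ℂ) = (Real.sin θ : ℂ) := by
    rw [← Complex.ofReal_mul]
    norm_cast
    rw [Real.tan_eq_sin_div_cos, div_mul_cancel₀ _ hc]
  have hplus : 1 + w = Complex.exp (θ * Complex.I) / (Real.cos θ : ℂ) := by
    rw [Complex.exp_mul_I, eq_div_iff hcC, ← Complex.ofReal_cos, ← Complex.ofReal_sin]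
    rw [hw]; linear_combination Complex.I * ht
  have hminus : 1 - w = Complex.exp (-θ * Complex.I) / (Real.cos θ : ℂ) := by
    rw [show (-θ:ℂ) * Complex.I = ((-θ:ℝ):ℂ) * Complex.I by push_cast; ring,
      Complex.exp_mul_I, eq_div_iff hcC, ← Complex.ofReal_cos, ← Complex.ofReal_sin,
      Real.cos_neg, Real.sin_neg, hw, Complex.ofReal_neg]
    linear_combination (-Complex.I) * ht
  have key := keyid18 L w
  have hsum : ∑ n ∈ Finset.range (L+1), (Nat.choose (2*L+1) (2*n) : ℂ)
        * (((-(Real.tan θ ^ 2)) : ℝ) : ℂ) ^ n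
      = ∑ n ∈ Finset.range (L+1), (Nat.choose (2*L+1) (2*n) : ℂ) * w^(2*n) := by
    refine Finset.sum_congr rfl fun n _ => ?_
    rw [hw2, ← pow_mul]
  have hexp : (1+w)^(2*L+1) + (1-w)^(2*L+1)
      = 2 * (Real.cos ((2*(L:ℝ)+1)*θ) : ℂ) / (Real.cos θ : ℂ) ^ (2*L+1) := by
    rw [hplus, hminus, div_pow, div_pow, ← Complex.exp_nat_mul, ← Complex.exp_nat_mul,
      ← add_div]
    congr 1
    rw [show ((2*L+1:ℕ):ℂ) * ((θ:ℂ) * Complex.I) = (((2*(L:ℝ)+1)*θ:ℝ):ℂ) * Complex.I by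
        push_cast; ring,
      show ((2*L+1:ℕ):ℂ) * (-(θ:ℂ) * Complex.I) = ((-((2*(L:ℝ)+1)*θ):ℝ):ℂ) * Complex.I by
        push_cast; ring,
      Complex.exp_mul_I, Complex.exp_mul_I, ← Complex.ofReal_cos, ← Complex.ofReal_sin,
      ← Complex.ofReal_cos, ← Complex.ofReal_sin, Real.cos_neg, Real.sin_neg]
    push_cast; ring
  have eq := key.symm.trans hexp
  rw [hsum]
  refine mul_left_cancel₀ (two_ne_zero) ?_
  rw [eq, mul_div_assoc]

/-- the complex roots of `s̃(y) = ∑_{n=0}^{L} C(2L+1, 2n) yⁿ` are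
exactly the `L` distinct negative real numbers
`y_{k,L} = -tan²(π(2k+1)/(2(2L+1)))`, `k = 0, …, L-1`. -/
theorem roots_of_sTilde (L : ℕ) (hL : 0 < L) :
    (∀ k < L, ∀ m < L, k ≠ m →
      -(Real.tan (Real.pi * (2 * (k : ℝ) + 1) / (2 * (2 * (L : ℝ) + 1))) ^ 2) ≠
      -(Real.tan (Real.pi * (2 * (m : ℝ) + 1) / (2 * (2 * (L : ℝ) + 1))) ^ 2)) ∧
    (∀ k < L,
      -(Real.tan (Real.pi * (2 * (k : ℝ) + 1) / (2 * (2 * (L : ℝ) + 1))) ^ 2) < 0) ∧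
    ∀ x : ℂ,
      (∑ n ∈ Finset.range (L + 1), (Nat.choose (2 * L + 1) (2 * n) : ℂ) * x ^ n) = 0 ↔
      ∃ k < L, x =
        ((-(Real.tan (Real.pi * (2 * (k : ℝ) + 1) / (2 * (2 * (L : ℝ) + 1))) ^ 2) : ℝ) : ℂ) := by
  have hpi := Real.pi_pos
  set θ : ℕ → ℝ := fun k => Real.pi * (2 * (k : ℝ) + 1) / (2 * (2 * (L : ℝ) + 1)) with hθdef
  have hD : (0:ℝ) < 2 * (2 * (L : ℝ) + 1) := by positivity
  have hθpos : ∀ k, 0 < θ k := fun k => by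
    have : (0:ℝ) ≤ (k:ℝ) := Nat.cast_nonneg k
    apply div_pos (by nlinarith) hD
  have hθlt : ∀ k < L, θ k < Real.pi / 2 := by
    intro k hk
    have hkL : (k:ℝ) < (L:ℝ) := by exact_mod_cast hk
    rw [hθdef, div_lt_iff₀ hD]
    nlinarith
  have hmem : ∀ k < L, θ k ∈ Set.Ioo (-(Real.pi/2)) (Real.pi/2) := fun k hk =>
    ⟨by linarith [hθpos k], hθlt k hk⟩
  have hcos : ∀ k < L, Real.cos (θ k) ≠ 0 := fun k hk =>
    (Real.cos_pos_of_mem_Ioo (hmem k hk)).ne'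
  have htanpos : ∀ k < L, 0 < Real.tan (θ k) := fun k hk =>
    Real.tan_pos_of_pos_of_lt_pi_div_two (hθpos k) (hθlt k hk)
  -- distinctness
  have hdist : ∀ k < L, ∀ m < L, k ≠ m →
      -(Real.tan (θ k) ^ 2) ≠ -(Real.tan (θ m) ^ 2) := by
    intro k hk m hm hkm heq
    have h1 : Real.tan (θ k) ^ 2 = Real.tan (θ m) ^ 2 := by linarith [neg_inj.mp heq]
    have h2 : Real.tan (θ k) = Real.tan (θ m) := by
      have habs := (sq_eq_sq_iff_abs_eq_abs _ _).mp h1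
      rwa [abs_of_pos (htanpos k hk), abs_of_pos (htanpos m hm)] at habs
    have h3 : θ k = θ m := Real.injOn_tan (hmem k hk) (hmem m hm) h2
    have h4 : (k:ℝ) = (m:ℝ) := by
      rw [hθdef] at h3
      simp only at h3
      rw [div_eq_div_iff hD.ne' hD.ne'] at h3
      have := mul_right_cancel₀ hD.ne' h3
      have := mul_left_cancel₀ Real.pi_ne_zero this
      linarith
    exact hkm (by exact_mod_cast h4)
  -- negativity
  have hneg : ∀ k < L, -(Real.tan (θ k) ^ 2) < 0 := fun k hk => by
    have := htanpos k hk; nlinarith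
  -- roots
  have hroot : ∀ k < L,
      (∑ n ∈ Finset.range (L + 1), (Nat.choose (2 * L + 1) (2 * n) : ℂ)
        * (((-(Real.tan (θ k) ^ 2)) : ℝ) : ℂ) ^ n) = 0 := by
    intro k hk
    rw [evaleq18 L (θ k) (hcos k hk)]
    have hz : Real.cos ((2*(L:ℝ)+1) * θ k) = 0 := by
      rw [Real.cos_eq_zero_iff]
      refine ⟨(k:ℤ), ?_⟩
      rw [hθdef]
      push_cast
      field_simp
    rw [hz, Complex.ofReal_zero, zero_div]
  refine ⟨hdist, hneg, ?_⟩
  -- polynomial counting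
  intro x
  constructor
  · intro hx
    classical
    set P : Polynomial ℂ :=
      ∑ n ∈ Finset.range (L+1), Polynomial.C ((Nat.choose (2*L+1) (2*n)) : ℂ) * Polynomial.X ^ n
      with hP
    have hPeval : ∀ z : ℂ, P.eval z
        = ∑ n ∈ Finset.range (L + 1), (Nat.choose (2 * L + 1) (2 * n) : ℂ) * z ^ n := by
      intro z
      rw [hP, Polynomial.eval_finset_sum]
      simp
    have hP1 : P.eval 0 = 1 := by
      rw [hPeval, Finset.sum_eq_single 0]
      · simp
      · intro b _ hb; simp [zero_pow hb]
      · intro h; simp at h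
    have hP0 : P ≠ 0 := fun h => by rw [h] at hP1; simp at hP1
    have hdeg : P.natDegree ≤ L := by
      refine Polynomial.natDegree_sum_le_of_forall_le _ _ fun i hi => ?_
      exact (Polynomial.natDegree_C_mul_X_pow_le _ _).trans
        (Nat.lt_succ_iff.mp (Finset.mem_range.mp hi))
    set S : Finset ℂ :=
      (Finset.range L).image (fun k => (((-(Real.tan (θ k) ^ 2)) : ℝ) : ℂ)) with hS
    have hScard : S.card = L := by
      rw [hS, Finset.card_image_of_injOn, Finset.card_range]
      intro k hk m hm h
      by_contra hkm
      exact hdist k (Finset.mem_range.mp hk) m (Finset.mem_range.mp hm) hkm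
        (by exact_mod_cast Complex.ofReal_injective h)
    have hSsub : S ⊆ P.roots.toFinset := by
      intro z hz
      rw [hS, Finset.mem_image] at hz
      obtain ⟨k, hk, rfl⟩ := hz
      rw [Multiset.mem_toFinset, Polynomial.mem_roots']
      exact ⟨hP0, by rw [Polynomial.IsRoot, hPeval]; exact hroot k (Finset.mem_range.mp hk)⟩
    by_contra hxS
    push_neg at hxS
    have hxS' : x ∉ S := by
      rw [hS, Finset.mem_image]
      rintro ⟨k, hk, rfl⟩
      exact hxS k (Finset.mem_range.mp hk) rfl
    have hxr : x ∈ P.roots.toFinset := by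
      rw [Multiset.mem_toFinset, Polynomial.mem_roots']
      exact ⟨hP0, by rw [Polynomial.IsRoot, hPeval]; exact hx⟩
    have hsub : insert x S ⊆ P.roots.toFinset := Finset.insert_subset hxr hSsub
    have : L + 1 ≤ L := by
      calc L + 1 = (insert x S).card := by rw [Finset.card_insert_of_notMem hxS', hScard]
      _ ≤ P.roots.toFinset.card := Finset.card_le_card hsub
      _ ≤ Multiset.card P.roots := Multiset.toFinset_card_le _
      _ ≤ P.natDegree := P.card_roots'
      _ ≤ L := hdeg
    omega
  · rintro ⟨k, hk, rfl⟩
    exact hroot k hk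
end
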